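/- For every commutative ring k and every k-valued measure μ on the class of permutations, one has 1 + μ(i₈) + μ(i₉) + μ(i₁₄) + μ(i₁₅) + μ(i₆₀) = 0, where i₈ is the inclusion of the subpermutation on {1,3} into the permutation 132, i₉ is the inclusion of the subpermutation on {1,2} into 132, i₁₄ is the inclusion of the subpermutation on {1,3} into 231, i₁₅ is the inclusion of the subpermutation on {1,2} into 231, and i₆₀ is the inclusion of the subpermutation on {1,2,4,5} into 21354. -/

import Mathlib

/-- A permutation: a finite set equipped with two linear orders. -/
structure Perm2 : Type 1 where
  A : Type
  fin : Fintype A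
  ord1 : LinearOrder A
  ord2 : LinearOrder A

attribute [instance] Perm2.fin

/-- The first order. -/
def Perm2.lt1 (X : Perm2) (a b : X.A) : Prop := X.ord1.lt a b
/-- The second order. -/
def Perm2.lt2 (X : Perm2) (a b : X.A) : Prop := X.ord2.lt a b

/-- An embedding of permutations: an injective map preserving both orders. -/
structure Emb (X Y : Perm2) where
  f : X.A → Y.A
  inj : Function.Injective f
  mono1 : ∀ a b : X.A, X.lt1 a b → Y.lt1 (f a) (f b)
  mono2 : ∀ a b : X.A, X.lt2 a b → Y.lt2 (f a) (f b)

/-- Composition of embeddings. -/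
def Emb.comp {X Y Z : Perm2} (j : Emb Y Z) (i : Emb X Y) : Emb X Z where
  f := j.f ∘ i.f
  inj := j.inj.comp i.inj
  mono1 := fun a b h => j.mono1 _ _ (i.mono1 a b h)
  mono2 := fun a b h => j.mono2 _ _ (i.mono2 a b h)

/-- An amalgamation of the embeddings `i : Y → X` and `j : Y → Y'`. -/
structure Amalg {Y X Y' : Perm2} (i : Emb Y X) (j : Emb Y Y') : Type 1 where
  Z : Perm2
  i' : Emb Y' Z
  j' : Emb X Z
  comm : ∀ a : Y.A, i'.f (j.f a) = j'.f (i.f a)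
  cover : ∀ z : Z.A, (∃ a, i'.f a = z) ∨ (∃ b, j'.f b = z)

/-- Isomorphism of amalgamations. -/
def AmalgIso {Y X Y' : Perm2} {i : Emb Y X} {j : Emb Y Y'} (A B : Amalg i j) : Prop :=
  ∃ e : Emb A.Z B.Z, Function.Surjective e.f ∧
    (∀ a, e.f (A.i'.f a) = B.i'.f a) ∧ (∀ b, e.f (A.j'.f b) = B.j'.f b)

/-- A measure on the class of permutations valued in a commutative ring `k`. -/
structure PMeasure (k : Type) [CommRing k] : Type 1 where
  μ : ∀ {X Y : Perm2}, Emb X Y → k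
  iso_invariant : ∀ {X Y X' Y' : Perm2} (i : Emb X Y) (i' : Emb X' Y')
    (u : Emb X X') (v : Emb Y Y'), Function.Surjective u.f → Function.Surjective v.f →
    (∀ a, v.f (i.f a) = i'.f (u.f a)) → μ i = μ i'
  iso_one : ∀ {X Y : Perm2} (i : Emb X Y), Function.Surjective i.f → μ i = 1
  comp_mul : ∀ {X Y Z : Perm2} (i : Emb X Y) (j : Emb Y Z), μ (j.comp i) = μ j * μ i
  amalg_sum : ∀ {Y X Y' : Perm2} (i : Emb Y X) (j : Emb Y Y') (n : ℕ)
    (r : Fin n → Amalg i j), (∀ A : Amalg i j, ∃! α : Fin n, AmalgIso (r α) A) →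
    μ i = ∑ α : Fin n, μ (r α).i'

/-- The permutation denoted by a sequence of distinct natural numbers: the underlying
set consists of the listed numbers, the first order is the numerical one, and the second
order is the order of appearance in the sequence. -/
def listPerm (l : List ℕ) : Perm2 where
  A := {n : ℕ // n ∈ l.toFinset}
  fin := by infer_instance
  ord1 := LinearOrder.lift' (fun x => x.val) Subtype.val_injective
  ord2 := LinearOrder.lift' (fun x => l.idxOf x.val)
    (fun a b h => Subtype.ext ((List.idxOf_inj (List.mem_toFinset.mp a.2)).mp h))

/-- The subpermutation of `X` on a subset `S`, with the induced orders. -/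
noncomputable def subPerm (X : Perm2) (S : Set X.A) : Perm2 where
  A := S
  fin := S.toFinite.fintype
  ord1 := @LinearOrder.lift' _ _ X.ord1 (fun x => x.val) Subtype.val_injective
  ord2 := @LinearOrder.lift' _ _ X.ord2 (fun x => x.val) Subtype.val_injective

/-- The inclusion of a subpermutation. -/
noncomputable def subEmb (X : Perm2) (S : Set X.A) : Emb (subPerm X S) X where
  f := Subtype.val
  inj := Subtype.val_injective
  mono1 := fun _ _ h => h
  mono2 := fun _ _ h => h

section Basic

theorem Perm2.lt1_trichotomy (Z : Perm2) (a b : Z.A) : Z.lt1 a b ∨ a = b ∨ Z.lt1 b a := by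
  letI := Z.ord1; exact lt_trichotomy a b

theorem Perm2.lt2_trichotomy (Z : Perm2) (a b : Z.A) : Z.lt2 a b ∨ a = b ∨ Z.lt2 b a := by
  letI := Z.ord2; exact lt_trichotomy a b

theorem Perm2.lt1_trans (Z : Perm2) {a b c : Z.A} (h : Z.lt1 a b) (h' : Z.lt1 b c) :
    Z.lt1 a c := by letI := Z.ord1; exact lt_trans (a := a) (b := b) h h'

theorem Perm2.lt2_trans (Z : Perm2) {a b c : Z.A} (h : Z.lt2 a b) (h' : Z.lt2 b c) :
    Z.lt2 a c := by letI := Z.ord2; exact lt_trans (a := a) (b := b) h h'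

theorem Perm2.lt1_irrefl (Z : Perm2) {a : Z.A} (h : Z.lt1 a a) : False := by
  letI := Z.ord1; exact lt_irrefl a h

theorem Perm2.lt2_irrefl (Z : Perm2) {a : Z.A} (h : Z.lt2 a a) : False := by
  letI := Z.ord2; exact lt_irrefl a h

theorem Perm2.lt1_asymm (Z : Perm2) {a b : Z.A} (h : Z.lt1 a b) (h' : Z.lt1 b a) : False :=
  Z.lt1_irrefl (Z.lt1_trans h h')

theorem Perm2.lt2_asymm (Z : Perm2) {a b : Z.A} (h : Z.lt2 a b) (h' : Z.lt2 b a) : False :=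
  Z.lt2_irrefl (Z.lt2_trans h h')

theorem Perm2.lt1_ne (Z : Perm2) {a b : Z.A} (h : Z.lt1 a b) : a ≠ b :=
  fun e => Z.lt1_irrefl (e ▸ h)

theorem Perm2.lt2_ne (Z : Perm2) {a b : Z.A} (h : Z.lt2 a b) : a ≠ b :=
  fun e => Z.lt2_irrefl (e ▸ h)

theorem Emb.eq_iff {P Q : Perm2} (e : Emb P Q) {a b : P.A} : e.f a = e.f b ↔ a = b :=
  ⟨fun h => e.inj h, fun h => congrArg e.f h⟩

theorem Emb.lt1_iff {P Q : Perm2} (e : Emb P Q) {a b : P.A} :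
    Q.lt1 (e.f a) (e.f b) ↔ P.lt1 a b := by
  refine ⟨fun h => ?_, e.mono1 a b⟩
  rcases P.lt1_trichotomy a b with h' | rfl | h'
  · exact h'
  · exact absurd h Q.lt1_irrefl
  · exact absurd h (fun hh => Q.lt1_asymm hh (e.mono1 _ _ h'))

theorem Emb.lt2_iff {P Q : Perm2} (e : Emb P Q) {a b : P.A} :
    Q.lt2 (e.f a) (e.f b) ↔ P.lt2 a b := by
  refine ⟨fun h => ?_, e.mono2 a b⟩
  rcases P.lt2_trichotomy a b with h' | rfl | h'
  · exact h'
  · exact absurd h Q.lt2_irrefl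
  · exact absurd h (fun hh => Q.lt2_asymm hh (e.mono2 _ _ h'))

/-- transfer of a strict relation through "equality iff" and the reverse relation. -/
theorem lt1_flip_transfer {Z₁ Z₂ : Perm2} {p q : Z₁.A} {p' q' : Z₂.A}
    (hEq : p = q ↔ p' = q') (hL : Z₁.lt1 q p ↔ Z₂.lt1 q' p') :
    Z₁.lt1 p q ↔ Z₂.lt1 p' q' := by
  constructor
  · intro h
    rcases Z₂.lt1_trichotomy p' q' with h' | h' | h'
    · exact h'
    · exact absurd (hEq.mpr h') (Z₁.lt1_ne h)
    · exact absurd (hL.mpr h') (fun hh => Z₁.lt1_asymm h hh)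
  · intro h
    rcases Z₁.lt1_trichotomy p q with h' | h' | h'
    · exact h'
    · exact absurd (hEq.mp h') (Z₂.lt1_ne h)
    · exact absurd (hL.mp h') (fun hh => Z₂.lt1_asymm h hh)

theorem lt2_flip_transfer {Z₁ Z₂ : Perm2} {p q : Z₁.A} {p' q' : Z₂.A}
    (hEq : p = q ↔ p' = q') (hL : Z₁.lt2 q p ↔ Z₂.lt2 q' p') :
    Z₁.lt2 p q ↔ Z₂.lt2 p' q' := by
  constructor
  · intro h
    rcases Z₂.lt2_trichotomy p' q' with h' | h' | h'
    · exact h'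
    · exact absurd (hEq.mpr h') (Z₁.lt2_ne h)
    · exact absurd (hL.mpr h') (fun hh => Z₁.lt2_asymm h hh)
  · intro h
    rcases Z₁.lt2_trichotomy p q with h' | h' | h'
    · exact h'
    · exact absurd (hEq.mp h') (Z₂.lt2_ne h)
    · exact absurd (hL.mp h') (fun hh => Z₂.lt2_asymm h hh)

end Basic

section OnePoint

variable {Y X Y' : Perm2} (i : Emb Y X) (j : Emb Y Y') (w : X.A) (v : Y'.A)

/-- The signature of an amalgamation: `none` if the two added points coincide, otherwise
the pair of booleans recording whether the `X`-point is below the `Y'`-point in each order. -/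
noncomputable def asig (A : Amalg i j) : Option (Bool × Bool) :=
  letI := Classical.propDecidable
  if A.i'.f v = A.j'.f w then none
  else some (decide (A.Z.lt1 (A.j'.f w) (A.i'.f v)), decide (A.Z.lt2 (A.j'.f w) (A.i'.f v)))

theorem asig_eq_none {A : Amalg i j} (h : A.i'.f v = A.j'.f w) : asig i j w v A = none := by
  unfold asig; rw [if_pos h]

theorem asig_eq_some {A : Amalg i j} {b1 b2 : Bool} (hne : A.i'.f v ≠ A.j'.f w)
    (h1 : A.Z.lt1 (A.j'.f w) (A.i'.f v) ↔ b1 = true)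
    (h2 : A.Z.lt2 (A.j'.f w) (A.i'.f v) ↔ b2 = true) :
    asig i j w v A = some (b1, b2) := by
  classical
  unfold asig
  rw [if_neg hne]
  congr 1
  have e1 : decide (A.Z.lt1 (A.j'.f w) (A.i'.f v)) = b1 := by
    cases b1
    · exact decide_eq_false (fun hh => by simp at h1; exact h1 hh)
    · exact decide_eq_true (h1.mpr rfl)
  have e2 : decide (A.Z.lt2 (A.j'.f w) (A.i'.f v)) = b2 := by
    cases b2
    · exact decide_eq_false (fun hh => by simp at h2; exact h2 hh)
    · exact decide_eq_true (h2.mpr rfl)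
  rw [e1, e2]

/-- Consistency of a first-order signature bit. -/
def C1 (b : Bool) : Prop :=
  if b then ∀ y, X.lt1 (i.f y) w → Y'.lt1 (j.f y) v
  else ∀ y, Y'.lt1 (j.f y) v → X.lt1 (i.f y) w

/-- Consistency of a second-order signature bit. -/
def C2 (b : Bool) : Prop :=
  if b then ∀ y, X.lt2 (i.f y) w → Y'.lt2 (j.f y) v
  else ∀ y, Y'.lt2 (j.f y) v → X.lt2 (i.f y) w

/-- Consistency of a signature. -/
def Cons : Option (Bool × Bool) → Prop
  | none => (∀ y, X.lt1 (i.f y) w ↔ Y'.lt1 (j.f y) v) ∧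
      (∀ y, X.lt2 (i.f y) w ↔ Y'.lt2 (j.f y) v)
  | some (b1, b2) => C1 i j w v b1 ∧ C2 i j w v b2

theorem cons_asig (A : Amalg i j) : Cons i j w v (asig i j w v A) := by
  by_cases h : A.i'.f v = A.j'.f w
  · rw [asig_eq_none i j w v h]
    constructor
    · intro y
      rw [← Emb.lt1_iff A.j' (a := i.f y) (b := w), ← h, ← A.comm y, Emb.lt1_iff A.i']
    · intro y
      rw [← Emb.lt2_iff A.j' (a := i.f y) (b := w), ← h, ← A.comm y, Emb.lt2_iff A.i']
  · classical
    unfold asig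
    rw [if_neg h]
    constructor
    · by_cases h1 : A.Z.lt1 (A.j'.f w) (A.i'.f v)
      · rw [decide_eq_true h1]
        unfold C1; rw [if_pos rfl]
        intro y hy
        have : A.Z.lt1 (A.i'.f (j.f y)) (A.i'.f v) := by
          rw [A.comm y]
          exact A.Z.lt1_trans ((Emb.lt1_iff A.j').mpr hy) h1
        exact (Emb.lt1_iff A.i').mp this
      · rw [decide_eq_false h1]
        unfold C1; rw [if_neg (by simp)]
        intro y hy
        have h2 : A.Z.lt1 (A.i'.f v) (A.j'.f w) := by
          rcases A.Z.lt1_trichotomy (A.i'.f v) (A.j'.f w) with hh | hh | hh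
          · exact hh
          · exact absurd hh h
          · exact absurd hh h1
        have : A.Z.lt1 (A.j'.f (i.f y)) (A.j'.f w) := by
          rw [← A.comm y]
          exact A.Z.lt1_trans ((Emb.lt1_iff A.i').mpr hy) h2
        exact (Emb.lt1_iff A.j').mp this
    · by_cases h1 : A.Z.lt2 (A.j'.f w) (A.i'.f v)
      · rw [decide_eq_true h1]
        unfold C2; rw [if_pos rfl]
        intro y hy
        have : A.Z.lt2 (A.i'.f (j.f y)) (A.i'.f v) := by
          rw [A.comm y]
          exact A.Z.lt2_trans ((Emb.lt2_iff A.j').mpr hy) h1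
        exact (Emb.lt2_iff A.i').mp this
      · rw [decide_eq_false h1]
        unfold C2; rw [if_neg (by simp)]
        intro y hy
        have h2 : A.Z.lt2 (A.i'.f v) (A.j'.f w) := by
          rcases A.Z.lt2_trichotomy (A.i'.f v) (A.j'.f w) with hh | hh | hh
          · exact hh
          · exact absurd hh h
          · exact absurd hh h1
        have : A.Z.lt2 (A.j'.f (i.f y)) (A.j'.f w) := by
          rw [← A.comm y]
          exact A.Z.lt2_trans ((Emb.lt2_iff A.i').mpr hy) h2
        exact (Emb.lt2_iff A.j').mp this

end OnePoint

section OnePoint2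

variable {Y X Y' : Perm2} {i : Emb Y X} {j : Emb Y Y'} {w : X.A} {v : Y'.A}

theorem asig_eq_of_iso (A B : Amalg i j) (h : AmalgIso A B) :
    asig i j w v A = asig i j w v B := by
  classical
  obtain ⟨e, _, hei, hej⟩ := h
  have hEq : (A.i'.f v = A.j'.f w) ↔ (B.i'.f v = B.j'.f w) := by
    rw [← hei v, ← hej w]; exact (Emb.eq_iff e).symm
  have h1 : A.Z.lt1 (A.j'.f w) (A.i'.f v) ↔ B.Z.lt1 (B.j'.f w) (B.i'.f v) := by
    rw [← hei, ← hej]; exact (Emb.lt1_iff e).symm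
  have h2 : A.Z.lt2 (A.j'.f w) (A.i'.f v) ↔ B.Z.lt2 (B.j'.f w) (B.i'.f v) := by
    rw [← hei, ← hej]; exact (Emb.lt2_iff e).symm
  by_cases hA : A.i'.f v = A.j'.f w
  · rw [asig_eq_none i j w v hA, asig_eq_none i j w v (hEq.mp hA)]
  · unfold asig
    rw [if_neg hA, if_neg (fun hh => hA (hEq.mpr hh))]
    rw [decide_eq_decide.mpr h1, decide_eq_decide.mpr h2]

theorem iso_of_asig_eq
    (hwc : ∀ x : X.A, x = w ∨ ∃ y, i.f y = x) (hwn : ∀ y, i.f y ≠ w)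
    (hvc : ∀ x : Y'.A, x = v ∨ ∃ y, j.f y = x) (hvn : ∀ y, j.f y ≠ v)
    (A B : Amalg i j) (h : asig i j w v A = asig i j w v B) : AmalgIso A B := by
  classical
  -- signature data transfer
  have hEq : (A.i'.f v = A.j'.f w) ↔ (B.i'.f v = B.j'.f w) := by
    constructor
    · intro hh
      by_contra hB
      rw [asig_eq_none i j w v hh] at h
      unfold asig at h
      rw [if_neg hB] at h
      cases h
    · intro hh
      by_contra hA
      rw [asig_eq_none i j w v hh] at h
      unfold asig at h
      rw [if_neg hA] at h
      cases h
  have hL1 : A.Z.lt1 (A.j'.f w) (A.i'.f v) ↔ B.Z.lt1 (B.j'.f w) (B.i'.f v) := by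
    by_cases hA : A.i'.f v = A.j'.f w
    · have hB := hEq.mp hA
      constructor
      · intro hh; exact absurd hh (hA ▸ fun hh2 => A.Z.lt1_irrefl hh2)
      · intro hh; exact absurd hh (hB ▸ fun hh2 => B.Z.lt1_irrefl hh2)
    · have hB := fun hh => hA (hEq.mpr hh)
      unfold asig at h
      rw [if_neg hA, if_neg hB] at h
      have hd := Option.some.inj h
      rw [Prod.mk.injEq] at hd
      exact decide_eq_decide.mp hd.1
  have hL2 : A.Z.lt2 (A.j'.f w) (A.i'.f v) ↔ B.Z.lt2 (B.j'.f w) (B.i'.f v) := by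
    by_cases hA : A.i'.f v = A.j'.f w
    · have hB := hEq.mp hA
      constructor
      · intro hh; exact absurd hh (hA ▸ fun hh2 => A.Z.lt2_irrefl hh2)
      · intro hh; exact absurd hh (hB ▸ fun hh2 => B.Z.lt2_irrefl hh2)
    · have hB := fun hh => hA (hEq.mpr hh)
      unfold asig at h
      rw [if_neg hA, if_neg hB] at h
      have hd := Option.some.inj h
      rw [Prod.mk.injEq] at hd
      exact decide_eq_decide.mp hd.2
  -- key pairwise relations between generators
  have key : ∀ (a : Y'.A) (b : X.A),
      (A.i'.f a = A.j'.f b ↔ B.i'.f a = B.j'.f b) ∧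
      (A.Z.lt1 (A.i'.f a) (A.j'.f b) ↔ B.Z.lt1 (B.i'.f a) (B.j'.f b)) ∧
      (A.Z.lt1 (A.j'.f b) (A.i'.f a) ↔ B.Z.lt1 (B.j'.f b) (B.i'.f a)) ∧
      (A.Z.lt2 (A.i'.f a) (A.j'.f b) ↔ B.Z.lt2 (B.i'.f a) (B.j'.f b)) ∧
      (A.Z.lt2 (A.j'.f b) (A.i'.f a) ↔ B.Z.lt2 (B.j'.f b) (B.i'.f a)) := by
    intro a b
    rcases hwc b with rfl | ⟨y, rfl⟩
    · rcases hvc a with rfl | ⟨y, rfl⟩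
      · exact ⟨hEq, lt1_flip_transfer hEq hL1, hL1, lt2_flip_transfer hEq hL2, hL2⟩
      · -- a = j y, b = w : reduces to relation of i y and w in X
        have cA : A.i'.f (j.f y) = A.j'.f (i.f y) := A.comm y
        have cB : B.i'.f (j.f y) = B.j'.f (i.f y) := B.comm y
        rw [cA, cB]
        refine ⟨?_, ?_, ?_, ?_, ?_⟩
        · rw [Emb.eq_iff A.j', Emb.eq_iff B.j']
        · rw [Emb.lt1_iff A.j', Emb.lt1_iff B.j']
        · rw [Emb.lt1_iff A.j', Emb.lt1_iff B.j']
        · rw [Emb.lt2_iff A.j', Emb.lt2_iff B.j']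
        · rw [Emb.lt2_iff A.j', Emb.lt2_iff B.j']
    · -- b = i y : A.j'.f (i y) = A.i'.f (j y)
      have cA : A.j'.f (i.f y) = A.i'.f (j.f y) := (A.comm y).symm
      have cB : B.j'.f (i.f y) = B.i'.f (j.f y) := (B.comm y).symm
      rw [cA, cB]
      refine ⟨?_, ?_, ?_, ?_, ?_⟩
      · rw [Emb.eq_iff A.i', Emb.eq_iff B.i']
      · rw [Emb.lt1_iff A.i', Emb.lt1_iff B.i']
      · rw [Emb.lt1_iff A.i', Emb.lt1_iff B.i']
      · rw [Emb.lt2_iff A.i', Emb.lt2_iff B.i']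
      · rw [Emb.lt2_iff A.i', Emb.lt2_iff B.i']
  -- construct the map
  have hexist : ∃ e : A.Z.A → B.Z.A,
      (∀ a, e (A.i'.f a) = B.i'.f a) ∧ (∀ b, e (A.j'.f b) = B.j'.f b) := by
    refine ⟨fun z => if h : ∃ a, A.i'.f a = z then B.i'.f h.choose
      else B.j'.f ((A.cover z).resolve_left h).choose, fun a => ?_, fun b => ?_⟩
    · beta_reduce
      rw [dif_pos ⟨a, rfl⟩]
      exact congrArg B.i'.f
        (A.i'.inj (Exists.choose_spec (⟨a,rfl⟩ : ∃ a', A.i'.f a' = A.i'.f a)))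
    · by_cases hb : ∃ a, A.i'.f a = A.j'.f b
      · beta_reduce
        rw [dif_pos hb]
        exact (key hb.choose b).1.mp hb.choose_spec
      · beta_reduce
        rw [dif_neg hb]
        exact congrArg B.j'.f (A.j'.inj (((A.cover _).resolve_left hb).choose_spec))
  obtain ⟨e, e_i, e_j⟩ := hexist
  have mono1 : ∀ z z', A.Z.lt1 z z' → B.Z.lt1 (e z) (e z') := by
    intro z z' hzz
    rcases A.cover z with ⟨a, rfl⟩ | ⟨b, rfl⟩ <;> rcases A.cover z' with ⟨a', rfl⟩ | ⟨b', rfl⟩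
    · rw [e_i, e_i]; exact B.i'.mono1 _ _ ((Emb.lt1_iff A.i').mp hzz)
    · rw [e_i, e_j]; exact (key a b').2.1.mp hzz
    · rw [e_j, e_i]; exact (key a' b).2.2.1.mp hzz
    · rw [e_j, e_j]; exact B.j'.mono1 _ _ ((Emb.lt1_iff A.j').mp hzz)
  have mono2 : ∀ z z', A.Z.lt2 z z' → B.Z.lt2 (e z) (e z') := by
    intro z z' hzz
    rcases A.cover z with ⟨a, rfl⟩ | ⟨b, rfl⟩ <;> rcases A.cover z' with ⟨a', rfl⟩ | ⟨b', rfl⟩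
    · rw [e_i, e_i]; exact B.i'.mono2 _ _ ((Emb.lt2_iff A.i').mp hzz)
    · rw [e_i, e_j]; exact (key a b').2.2.2.1.mp hzz
    · rw [e_j, e_i]; exact (key a' b).2.2.2.2.mp hzz
    · rw [e_j, e_j]; exact B.j'.mono2 _ _ ((Emb.lt2_iff A.j').mp hzz)
  have einj : Function.Injective e := by
    intro z z' hzz
    by_contra hne
    rcases A.Z.lt1_trichotomy z z' with hlt | hlt | hlt
    · exact B.Z.lt1_irrefl (hzz ▸ mono1 _ _ hlt)
    · exact hne hlt
    · exact B.Z.lt1_irrefl (hzz ▸ mono1 _ _ hlt)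
  have esurj : Function.Surjective e := by
    intro zb
    rcases B.cover zb with ⟨a, rfl⟩ | ⟨b, rfl⟩
    · exact ⟨A.i'.f a, e_i a⟩
    · exact ⟨A.j'.f b, e_j b⟩
  exact ⟨⟨e, einj, mono1, mono2⟩, esurj, e_i, e_j⟩

/-- The master one-point amalgamation lemma. -/
theorem onePoint {k : Type} [CommRing k] (m : PMeasure k)
    (hwc : ∀ x : X.A, x = w ∨ ∃ y, i.f y = x) (hwn : ∀ y, i.f y ≠ w)
    (hvc : ∀ x : Y'.A, x = v ∨ ∃ y, j.f y = x) (hvn : ∀ y, j.f y ≠ v)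
    (n : ℕ) (r : Fin n → Amalg i j)
    (hinj : ∀ α β, asig i j w v (r α) = asig i j w v (r β) → α = β)
    (hcov : ∀ s, Cons i j w v s → ∃ α, asig i j w v (r α) = s) :
    m.μ i = ∑ α : Fin n, m.μ (r α).i' := by
  apply m.amalg_sum i j n r
  intro A
  obtain ⟨α, hα⟩ := hcov (asig i j w v A) (cons_asig i j w v A)
  refine ⟨α, iso_of_asig_eq hwc hwn hvc hvn (r α) A hα, ?_⟩
  intro β hβ
  exact hinj β α ((asig_eq_of_iso (r β) A hβ).trans hα.symm)
end OnePoint2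

section ListPermInfra

theorem listPerm_lt1_iff (l : List ℕ) (a b : (listPerm l).A) :
    (listPerm l).lt1 a b ↔ a.val < b.val := Iff.rfl

theorem listPerm_lt2_iff (l : List ℕ) (a b : (listPerm l).A) :
    (listPerm l).lt2 a b ↔ l.idxOf a.val < l.idxOf b.val := Iff.rfl

instance listPermDecLt1 (l : List ℕ) (a b : (listPerm l).A) :
    Decidable ((listPerm l).lt1 a b) :=
  decidable_of_iff _ (listPerm_lt1_iff l a b).symm

instance listPermDecLt2 (l : List ℕ) (a b : (listPerm l).A) :
    Decidable ((listPerm l).lt2 a b) :=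
  decidable_of_iff _ (listPerm_lt2_iff l a b).symm

/-- Build an embedding between list permutations from a value map. -/
def mkEmb (l₁ l₂ : List ℕ) (g : ℕ → ℕ)
    (h1 : ∀ a : (listPerm l₁).A, g a.val ∈ l₂.toFinset)
    (h2 : ∀ a b : (listPerm l₁).A, a.val < b.val → g a.val < g b.val)
    (h3 : ∀ a b : (listPerm l₁).A, l₁.idxOf a.val < l₁.idxOf b.val →
        l₂.idxOf (g a.val) < l₂.idxOf (g b.val)) :
    Emb (listPerm l₁) (listPerm l₂) where
  f a := ⟨g a.val, h1 a⟩
  inj := by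
    intro a b h
    have hg : g a.val = g b.val := congrArg Subtype.val h
    rcases Nat.lt_trichotomy a.val b.val with hl | hl | hl
    · exact absurd hg (Nat.ne_of_lt (h2 a b hl))
    · exact Subtype.ext hl
    · exact absurd hg.symm (Nat.ne_of_lt (h2 b a hl))
  mono1 := fun a b h => h2 a b h
  mono2 := fun a b h => h3 a b h

/-- The identity embedding. -/
def Emb.refl (X : Perm2) : Emb X X where
  f := id
  inj := fun _ _ h => h
  mono1 := fun _ _ h => h
  mono2 := fun _ _ h => h

/-- Conversion of the measure of a `mkEmb` to the measure of a subpermutation inclusion. -/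
theorem mu_mkEmb {k : Type} [CommRing k] (m : PMeasure k) {l₁ l₂ : List ℕ} (S : Set ℕ)
    {g : ℕ → ℕ} {h1 : ∀ a : (listPerm l₁).A, g a.val ∈ l₂.toFinset}
    {h2 : ∀ a b : (listPerm l₁).A, a.val < b.val → g a.val < g b.val}
    {h3 : ∀ a b : (listPerm l₁).A, l₁.idxOf a.val < l₁.idxOf b.val →
        l₂.idxOf (g a.val) < l₂.idxOf (g b.val)}
    (hmem : ∀ a : (listPerm l₁).A, g a.val ∈ S)
    (hsurj : ∀ b : (listPerm l₂).A, b.val ∈ S → ∃ a : (listPerm l₁).A, g a.val = b.val) :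
    m.μ (mkEmb l₁ l₂ g h1 h2 h3) =
      m.μ (subEmb (listPerm l₂) {a : (listPerm l₂).A | a.val ∈ S}) := by
  refine m.iso_invariant _ _
    ⟨fun a => ⟨⟨g a.val, h1 a⟩, hmem a⟩, ?_, ?_, ?_⟩ (Emb.refl (listPerm l₂)) ?_ ?_ ?_
  · intro a b h
    have hg : g a.val = g b.val := congrArg (fun c => c.val.val) h
    rcases Nat.lt_trichotomy a.val b.val with hl | hl | hl
    · exact absurd hg (Nat.ne_of_lt (h2 a b hl))
    · exact Subtype.ext hl
    · exact absurd hg.symm (Nat.ne_of_lt (h2 b a hl))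
  · exact fun a b h => h2 a b h
  · exact fun a b h => h3 a b h
  · intro c
    obtain ⟨a, ha⟩ := hsurj c.val c.property
    exact ⟨a, Subtype.ext (Subtype.ext ha)⟩
  · intro b
    exact ⟨b, rfl⟩
  · intro a
    rfl

/-- A surjective embedding has measure 1. -/
theorem mu_of_surj {k : Type} [CommRing k] (m : PMeasure k) {P Q : Perm2} (e : Emb P Q)
    (h : ∀ b : Q.A, ∃ a, e.f a = b) : m.μ e = 1 :=
  m.iso_one e h

end ListPermInfra

section ConsUnfold

variable {Y X Y' : Perm2} (i : Emb Y X) (j : Emb Y Y') (w : X.A) (v : Y'.A)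

theorem Cons_none : Cons i j w v none ↔
    ((∀ y, X.lt1 (i.f y) w ↔ Y'.lt1 (j.f y) v) ∧
      (∀ y, X.lt2 (i.f y) w ↔ Y'.lt2 (j.f y) v)) := Iff.rfl

theorem Cons_some (b1 b2 : Bool) : Cons i j w v (some (b1, b2)) ↔
    (C1 i j w v b1 ∧ C2 i j w v b2) := Iff.rfl

theorem C1_true : C1 i j w v true ↔ (∀ y, X.lt1 (i.f y) w → Y'.lt1 (j.f y) v) := by
  simp [C1]

theorem C1_false : C1 i j w v false ↔ (∀ y, Y'.lt1 (j.f y) v → X.lt1 (i.f y) w) := by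
  simp [C1]

theorem C2_true : C2 i j w v true ↔ (∀ y, X.lt2 (i.f y) w → Y'.lt2 (j.f y) v) := by
  simp [C2]

theorem C2_false : C2 i j w v false ↔ (∀ y, Y'.lt2 (j.f y) v → X.lt2 (i.f y) w) := by
  simp [C2]

end ConsUnfold

instance listPermDecEq (l : List ℕ) : DecidableEq (listPerm l).A := fun a b =>
  decidable_of_iff (a.val = b.val) ⟨Subtype.ext, fun h => congrArg Subtype.val h⟩

/-- Conversion with a list-based description of the value set. -/
theorem mu_mkEmbL {k : Type} [CommRing k] (m : PMeasure k) {l₁ l₂ : List ℕ} (S : Set ℕ)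
    (SL : List ℕ) (hS : ∀ x : ℕ, x ∈ S ↔ x ∈ SL)
    {g : ℕ → ℕ} {h1 : ∀ a : (listPerm l₁).A, g a.val ∈ l₂.toFinset}
    {h2 : ∀ a b : (listPerm l₁).A, a.val < b.val → g a.val < g b.val}
    {h3 : ∀ a b : (listPerm l₁).A, l₁.idxOf a.val < l₁.idxOf b.val →
        l₂.idxOf (g a.val) < l₂.idxOf (g b.val)}
    (hmem : ∀ a : (listPerm l₁).A, g a.val ∈ SL)
    (hsurj : ∀ b : (listPerm l₂).A, b.val ∈ SL → ∃ a : (listPerm l₁).A, g a.val = b.val) :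
    m.μ (mkEmb l₁ l₂ g h1 h2 h3) =
      m.μ (subEmb (listPerm l₂) {a : (listPerm l₂).A | a.val ∈ S}) :=
  mu_mkEmb m S (fun a => (hS _).mpr (hmem a)) (fun b hb => hsurj b ((hS _).mp hb))


abbrev i_0 : Emb (listPerm [1]) (listPerm [2,1]) :=
  mkEmb _ _ (fun n => n) (by decide) (by decide) (by decide)
abbrev j_0 : Emb (listPerm [1]) (listPerm [1,2]) :=
  mkEmb _ _ (fun n => 2) (by decide) (by decide) (by decide)
abbrev w_0 : (listPerm [2,1]).A := ⟨2, by decide⟩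
abbrev v_0 : (listPerm [1,2]).A := ⟨1, by decide⟩
abbrev ip_0_0 : Emb (listPerm [1,2]) (listPerm [3,1,2]) :=
  mkEmb _ _ (fun n => n) (by decide) (by decide) (by decide)
abbrev jp_0_0 : Emb (listPerm [2,1]) (listPerm [3,1,2]) :=
  mkEmb _ _ (fun n => if n = 1 then 2 else 3) (by decide) (by decide) (by decide)
abbrev A_0_0 : Amalg i_0 j_0 where
  Z := listPerm [3,1,2]
  i' := ip_0_0
  j' := jp_0_0
  comm := by decide
  cover := by decide
abbrev ip_0_1 : Emb (listPerm [1,2]) (listPerm [1,3,2]) :=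
  mkEmb _ _ (fun n => n) (by decide) (by decide) (by decide)
abbrev jp_0_1 : Emb (listPerm [2,1]) (listPerm [1,3,2]) :=
  mkEmb _ _ (fun n => if n = 1 then 2 else 3) (by decide) (by decide) (by decide)
abbrev A_0_1 : Amalg i_0 j_0 where
  Z := listPerm [1,3,2]
  i' := ip_0_1
  j' := jp_0_1
  comm := by decide
  cover := by decide
abbrev r_0 : Fin 2 → Amalg i_0 j_0 := ![A_0_0, A_0_1]
abbrev sg_0 : Fin 2 → Option (Bool × Bool) := ![some (false, true), some (false, false)]
theorem s_0_0 : asig i_0 j_0 w_0 v_0 A_0_0 = some (false, true) :=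
  asig_eq_some _ _ _ _ (by decide) (iff_of_false (by decide) (by simp)) (iff_of_true (by decide) rfl)
theorem s_0_1 : asig i_0 j_0 w_0 v_0 A_0_1 = some (false, false) :=
  asig_eq_some _ _ _ _ (by decide) (iff_of_false (by decide) (by simp)) (iff_of_false (by decide) (by simp))
theorem eqn_0 (k : Type) [CommRing k] (m : PMeasure k) :
    m.μ (subEmb (listPerm [2,1]) {a | a.val ∈ ({1} : Set ℕ)}) =
      m.μ (subEmb (listPerm [3,1,2]) {a | a.val ∈ ({1,2} : Set ℕ)}) + m.μ (subEmb (listPerm [1,3,2]) {a | a.val ∈ ({1,2} : Set ℕ)}) := by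
  have hsum := onePoint (i := i_0) (j := j_0) (w := w_0) (v := v_0) m
    (by decide) (by decide) (by decide) (by decide) 2 r_0
    (by
      have hs : ∀ α, asig i_0 j_0 w_0 v_0 (r_0 α) = sg_0 α := by
        intro α; fin_cases α
        · exact s_0_0
        · exact s_0_1
      have hdist : ∀ α β : Fin 2, sg_0 α = sg_0 β → α = β := by decide
      exact fun α β h => hdist α β (by rw [← hs α, ← hs β]; exact h))
    (by
      intro s hs
      rcases s with _ | ⟨b1, b2⟩
      · exact absurd hs (by rw [Cons_none]; decide)
      · cases b1 <;> cases b2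
        · exact ⟨1, s_0_1⟩
        · exact ⟨0, s_0_0⟩
        · exact absurd hs (by rw [Cons_some, C1_true, C2_false]; decide)
        · exact absurd hs (by rw [Cons_some, C1_true, C2_true]; decide)
      )
  rw [Fin.sum_univ_two] at hsum
  have hL : m.μ i_0 = m.μ (subEmb (listPerm [2,1]) {a | a.val ∈ ({1} : Set ℕ)}) := by
    refine mu_mkEmbL m _ [1] ?_ ?_ ?_
    · intro x; simp
    · decide
    · decide
  rw [show (r_0 0).i' = ip_0_0 from rfl] at hsum
  have h0 : m.μ ip_0_0 = m.μ (subEmb (listPerm [3,1,2]) {a | a.val ∈ ({1,2} : Set ℕ)}) := by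
    refine mu_mkEmbL m _ [1,2] ?_ ?_ ?_
    · intro x; simp
    · decide
    · decide
  rw [show (r_0 1).i' = ip_0_1 from rfl] at hsum
  have h1 : m.μ ip_0_1 = m.μ (subEmb (listPerm [1,3,2]) {a | a.val ∈ ({1,2} : Set ℕ)}) := by
    refine mu_mkEmbL m _ [1,2] ?_ ?_ ?_
    · intro x; simp
    · decide
    · decide
  rw [hL] at hsum
  rw [← h0, ← h1]
  exact hsum


abbrev i_1 : Emb (listPerm [1]) (listPerm [2,1]) :=
  mkEmb _ _ (fun n => n) (by decide) (by decide) (by decide)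
abbrev j_1 : Emb (listPerm [1]) (listPerm [2,1]) :=
  mkEmb _ _ (fun n => n) (by decide) (by decide) (by decide)
abbrev w_1 : (listPerm [2,1]).A := ⟨2, by decide⟩
abbrev v_1 : (listPerm [2,1]).A := ⟨2, by decide⟩
abbrev ip_1_0 : Emb (listPerm [2,1]) (listPerm [2,1]) :=
  mkEmb _ _ (fun n => n) (by decide) (by decide) (by decide)
abbrev jp_1_0 : Emb (listPerm [2,1]) (listPerm [2,1]) :=
  mkEmb _ _ (fun n => n) (by decide) (by decide) (by decide)
abbrev A_1_0 : Amalg i_1 j_1 where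
  Z := listPerm [2,1]
  i' := ip_1_0
  j' := jp_1_0
  comm := by decide
  cover := by decide
abbrev ip_1_1 : Emb (listPerm [2,1]) (listPerm [2,3,1]) :=
  mkEmb _ _ (fun n => if n = 1 then 1 else 3) (by decide) (by decide) (by decide)
abbrev jp_1_1 : Emb (listPerm [2,1]) (listPerm [2,3,1]) :=
  mkEmb _ _ (fun n => n) (by decide) (by decide) (by decide)
abbrev A_1_1 : Amalg i_1 j_1 where
  Z := listPerm [2,3,1]
  i' := ip_1_1
  j' := jp_1_1
  comm := by decide
  cover := by decide
abbrev ip_1_2 : Emb (listPerm [2,1]) (listPerm [3,2,1]) :=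
  mkEmb _ _ (fun n => n) (by decide) (by decide) (by decide)
abbrev jp_1_2 : Emb (listPerm [2,1]) (listPerm [3,2,1]) :=
  mkEmb _ _ (fun n => if n = 1 then 1 else 3) (by decide) (by decide) (by decide)
abbrev A_1_2 : Amalg i_1 j_1 where
  Z := listPerm [3,2,1]
  i' := ip_1_2
  j' := jp_1_2
  comm := by decide
  cover := by decide
abbrev ip_1_3 : Emb (listPerm [2,1]) (listPerm [3,2,1]) :=
  mkEmb _ _ (fun n => if n = 1 then 1 else 3) (by decide) (by decide) (by decide)
abbrev jp_1_3 : Emb (listPerm [2,1]) (listPerm [3,2,1]) :=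
  mkEmb _ _ (fun n => n) (by decide) (by decide) (by decide)
abbrev A_1_3 : Amalg i_1 j_1 where
  Z := listPerm [3,2,1]
  i' := ip_1_3
  j' := jp_1_3
  comm := by decide
  cover := by decide
abbrev ip_1_4 : Emb (listPerm [2,1]) (listPerm [2,3,1]) :=
  mkEmb _ _ (fun n => n) (by decide) (by decide) (by decide)
abbrev jp_1_4 : Emb (listPerm [2,1]) (listPerm [2,3,1]) :=
  mkEmb _ _ (fun n => if n = 1 then 1 else 3) (by decide) (by decide) (by decide)
abbrev A_1_4 : Amalg i_1 j_1 where
  Z := listPerm [2,3,1]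
  i' := ip_1_4
  j' := jp_1_4
  comm := by decide
  cover := by decide
abbrev r_1 : Fin 5 → Amalg i_1 j_1 := ![A_1_0, A_1_1, A_1_2, A_1_3, A_1_4]
abbrev sg_1 : Fin 5 → Option (Bool × Bool) := ![none, some (true, true), some (false, true), some (true, false), some (false, false)]
theorem s_1_0 : asig i_1 j_1 w_1 v_1 A_1_0 = none :=
  asig_eq_none _ _ _ _ (by decide)
theorem s_1_1 : asig i_1 j_1 w_1 v_1 A_1_1 = some (true, true) :=
  asig_eq_some _ _ _ _ (by decide) (iff_of_true (by decide) rfl) (iff_of_true (by decide) rfl)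
theorem s_1_2 : asig i_1 j_1 w_1 v_1 A_1_2 = some (false, true) :=
  asig_eq_some _ _ _ _ (by decide) (iff_of_false (by decide) (by simp)) (iff_of_true (by decide) rfl)
theorem s_1_3 : asig i_1 j_1 w_1 v_1 A_1_3 = some (true, false) :=
  asig_eq_some _ _ _ _ (by decide) (iff_of_true (by decide) rfl) (iff_of_false (by decide) (by simp))
theorem s_1_4 : asig i_1 j_1 w_1 v_1 A_1_4 = some (false, false) :=
  asig_eq_some _ _ _ _ (by decide) (iff_of_false (by decide) (by simp)) (iff_of_false (by decide) (by simp))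
theorem eqn_1 (k : Type) [CommRing k] (m : PMeasure k) :
    m.μ (subEmb (listPerm [2,1]) {a | a.val ∈ ({1} : Set ℕ)}) =
      (1 : k) + m.μ (subEmb (listPerm [2,3,1]) {a | a.val ∈ ({1,3} : Set ℕ)}) + m.μ (subEmb (listPerm [3,2,1]) {a | a.val ∈ ({1,2} : Set ℕ)}) + m.μ (subEmb (listPerm [3,2,1]) {a | a.val ∈ ({1,3} : Set ℕ)}) + m.μ (subEmb (listPerm [2,3,1]) {a | a.val ∈ ({1,2} : Set ℕ)}) := by
  have hsum := onePoint (i := i_1) (j := j_1) (w := w_1) (v := v_1) m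
    (by decide) (by decide) (by decide) (by decide) 5 r_1
    (by
      have hs : ∀ α, asig i_1 j_1 w_1 v_1 (r_1 α) = sg_1 α := by
        intro α; fin_cases α
        · exact s_1_0
        · exact s_1_1
        · exact s_1_2
        · exact s_1_3
        · exact s_1_4
      have hdist : ∀ α β : Fin 5, sg_1 α = sg_1 β → α = β := by decide
      exact fun α β h => hdist α β (by rw [← hs α, ← hs β]; exact h))
    (by
      intro s hs
      rcases s with _ | ⟨b1, b2⟩
      · exact ⟨0, s_1_0⟩
      · cases b1 <;> cases b2
        · exact ⟨4, s_1_4⟩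
        · exact ⟨2, s_1_2⟩
        · exact ⟨3, s_1_3⟩
        · exact ⟨1, s_1_1⟩
      )
  rw [Fin.sum_univ_five] at hsum
  have hL : m.μ i_1 = m.μ (subEmb (listPerm [2,1]) {a | a.val ∈ ({1} : Set ℕ)}) := by
    refine mu_mkEmbL m _ [1] ?_ ?_ ?_
    · intro x; simp
    · decide
    · decide
  rw [show (r_1 0).i' = ip_1_0 from rfl] at hsum
  have h0 : m.μ ip_1_0 = (1 : k) := by
    apply m.iso_one
    unfold Function.Surjective
    decide
  rw [show (r_1 1).i' = ip_1_1 from rfl] at hsum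
  have h1 : m.μ ip_1_1 = m.μ (subEmb (listPerm [2,3,1]) {a | a.val ∈ ({1,3} : Set ℕ)}) := by
    refine mu_mkEmbL m _ [1,3] ?_ ?_ ?_
    · intro x; simp
    · decide
    · decide
  rw [show (r_1 2).i' = ip_1_2 from rfl] at hsum
  have h2 : m.μ ip_1_2 = m.μ (subEmb (listPerm [3,2,1]) {a | a.val ∈ ({1,2} : Set ℕ)}) := by
    refine mu_mkEmbL m _ [1,2] ?_ ?_ ?_
    · intro x; simp
    · decide
    · decide
  rw [show (r_1 3).i' = ip_1_3 from rfl] at hsum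
  have h3 : m.μ ip_1_3 = m.μ (subEmb (listPerm [3,2,1]) {a | a.val ∈ ({1,3} : Set ℕ)}) := by
    refine mu_mkEmbL m _ [1,3] ?_ ?_ ?_
    · intro x; simp
    · decide
    · decide
  rw [show (r_1 4).i' = ip_1_4 from rfl] at hsum
  have h4 : m.μ ip_1_4 = m.μ (subEmb (listPerm [2,3,1]) {a | a.val ∈ ({1,2} : Set ℕ)}) := by
    refine mu_mkEmbL m _ [1,2] ?_ ?_ ?_
    · intro x; simp
    · decide
    · decide
  rw [hL] at hsum
  rw [← h0, ← h1, ← h2, ← h3, ← h4]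
  exact hsum


abbrev i_2 : Emb (listPerm [1]) (listPerm [2,1]) :=
  mkEmb _ _ (fun n => n) (by decide) (by decide) (by decide)
abbrev j_2 : Emb (listPerm [1]) (listPerm [2,1]) :=
  mkEmb _ _ (fun n => 2) (by decide) (by decide) (by decide)
abbrev w_2 : (listPerm [2,1]).A := ⟨2, by decide⟩
abbrev v_2 : (listPerm [2,1]).A := ⟨1, by decide⟩
abbrev ip_2_0 : Emb (listPerm [2,1]) (listPerm [3,2,1]) :=
  mkEmb _ _ (fun n => n) (by decide) (by decide) (by decide)
abbrev jp_2_0 : Emb (listPerm [2,1]) (listPerm [3,2,1]) :=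
  mkEmb _ _ (fun n => if n = 1 then 2 else 3) (by decide) (by decide) (by decide)
abbrev A_2_0 : Amalg i_2 j_2 where
  Z := listPerm [3,2,1]
  i' := ip_2_0
  j' := jp_2_0
  comm := by decide
  cover := by decide
abbrev r_2 : Fin 1 → Amalg i_2 j_2 := ![A_2_0]
abbrev sg_2 : Fin 1 → Option (Bool × Bool) := ![some (false, true)]
theorem s_2_0 : asig i_2 j_2 w_2 v_2 A_2_0 = some (false, true) :=
  asig_eq_some _ _ _ _ (by decide) (iff_of_false (by decide) (by simp)) (iff_of_true (by decide) rfl)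
theorem eqn_2 (k : Type) [CommRing k] (m : PMeasure k) :
    m.μ (subEmb (listPerm [2,1]) {a | a.val ∈ ({1} : Set ℕ)}) =
      m.μ (subEmb (listPerm [3,2,1]) {a | a.val ∈ ({1,2} : Set ℕ)}) := by
  have hsum := onePoint (i := i_2) (j := j_2) (w := w_2) (v := v_2) m
    (by decide) (by decide) (by decide) (by decide) 1 r_2
    (by
      have hs : ∀ α, asig i_2 j_2 w_2 v_2 (r_2 α) = sg_2 α := by
        intro α; fin_cases α
        · exact s_2_0
      have hdist : ∀ α β : Fin 1, sg_2 α = sg_2 β → α = β := by decide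
      exact fun α β h => hdist α β (by rw [← hs α, ← hs β]; exact h))
    (by
      intro s hs
      rcases s with _ | ⟨b1, b2⟩
      · exact absurd hs (by rw [Cons_none]; decide)
      · cases b1 <;> cases b2
        · exact absurd hs (by rw [Cons_some, C1_false, C2_false]; decide)
        · exact ⟨0, s_2_0⟩
        · exact absurd hs (by rw [Cons_some, C1_true, C2_false]; decide)
        · exact absurd hs (by rw [Cons_some, C1_true, C2_true]; decide)
      )
  rw [Fin.sum_univ_one] at hsum
  have hL : m.μ i_2 = m.μ (subEmb (listPerm [2,1]) {a | a.val ∈ ({1} : Set ℕ)}) := by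
    refine mu_mkEmbL m _ [1] ?_ ?_ ?_
    · intro x; simp
    · decide
    · decide
  rw [show (r_2 0).i' = ip_2_0 from rfl] at hsum
  have h0 : m.μ ip_2_0 = m.μ (subEmb (listPerm [3,2,1]) {a | a.val ∈ ({1,2} : Set ℕ)}) := by
    refine mu_mkEmbL m _ [1,2] ?_ ?_ ?_
    · intro x; simp
    · decide
    · decide
  rw [hL] at hsum
  rw [← h0]
  exact hsum


abbrev i_3 : Emb (listPerm [1]) (listPerm [2,1]) :=
  mkEmb _ _ (fun n => n) (by decide) (by decide) (by decide)
abbrev j_3 : Emb (listPerm [1]) (listPerm [1,2]) :=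
  mkEmb _ _ (fun n => n) (by decide) (by decide) (by decide)
abbrev w_3 : (listPerm [2,1]).A := ⟨2, by decide⟩
abbrev v_3 : (listPerm [1,2]).A := ⟨2, by decide⟩
abbrev ip_3_0 : Emb (listPerm [1,2]) (listPerm [2,1,3]) :=
  mkEmb _ _ (fun n => if n = 1 then 1 else 3) (by decide) (by decide) (by decide)
abbrev jp_3_0 : Emb (listPerm [2,1]) (listPerm [2,1,3]) :=
  mkEmb _ _ (fun n => n) (by decide) (by decide) (by decide)
abbrev A_3_0 : Amalg i_3 j_3 where
  Z := listPerm [2,1,3]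
  i' := ip_3_0
  j' := jp_3_0
  comm := by decide
  cover := by decide
abbrev ip_3_1 : Emb (listPerm [1,2]) (listPerm [3,1,2]) :=
  mkEmb _ _ (fun n => n) (by decide) (by decide) (by decide)
abbrev jp_3_1 : Emb (listPerm [2,1]) (listPerm [3,1,2]) :=
  mkEmb _ _ (fun n => if n = 1 then 1 else 3) (by decide) (by decide) (by decide)
abbrev A_3_1 : Amalg i_3 j_3 where
  Z := listPerm [3,1,2]
  i' := ip_3_1
  j' := jp_3_1
  comm := by decide
  cover := by decide
abbrev r_3 : Fin 2 → Amalg i_3 j_3 := ![A_3_0, A_3_1]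
abbrev sg_3 : Fin 2 → Option (Bool × Bool) := ![some (true, true), some (false, true)]
theorem s_3_0 : asig i_3 j_3 w_3 v_3 A_3_0 = some (true, true) :=
  asig_eq_some _ _ _ _ (by decide) (iff_of_true (by decide) rfl) (iff_of_true (by decide) rfl)
theorem s_3_1 : asig i_3 j_3 w_3 v_3 A_3_1 = some (false, true) :=
  asig_eq_some _ _ _ _ (by decide) (iff_of_false (by decide) (by simp)) (iff_of_true (by decide) rfl)
theorem eqn_3 (k : Type) [CommRing k] (m : PMeasure k) :
    m.μ (subEmb (listPerm [2,1]) {a | a.val ∈ ({1} : Set ℕ)}) =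
      m.μ (subEmb (listPerm [2,1,3]) {a | a.val ∈ ({1,3} : Set ℕ)}) + m.μ (subEmb (listPerm [3,1,2]) {a | a.val ∈ ({1,2} : Set ℕ)}) := by
  have hsum := onePoint (i := i_3) (j := j_3) (w := w_3) (v := v_3) m
    (by decide) (by decide) (by decide) (by decide) 2 r_3
    (by
      have hs : ∀ α, asig i_3 j_3 w_3 v_3 (r_3 α) = sg_3 α := by
        intro α; fin_cases α
        · exact s_3_0
        · exact s_3_1
      have hdist : ∀ α β : Fin 2, sg_3 α = sg_3 β → α = β := by decide
      exact fun α β h => hdist α β (by rw [← hs α, ← hs β]; exact h))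
    (by
      intro s hs
      rcases s with _ | ⟨b1, b2⟩
      · exact absurd hs (by rw [Cons_none]; decide)
      · cases b1 <;> cases b2
        · exact absurd hs (by rw [Cons_some, C1_false, C2_false]; decide)
        · exact ⟨1, s_3_1⟩
        · exact absurd hs (by rw [Cons_some, C1_true, C2_false]; decide)
        · exact ⟨0, s_3_0⟩
      )
  rw [Fin.sum_univ_two] at hsum
  have hL : m.μ i_3 = m.μ (subEmb (listPerm [2,1]) {a | a.val ∈ ({1} : Set ℕ)}) := by
    refine mu_mkEmbL m _ [1] ?_ ?_ ?_
    · intro x; simp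
    · decide
    · decide
  rw [show (r_3 0).i' = ip_3_0 from rfl] at hsum
  have h0 : m.μ ip_3_0 = m.μ (subEmb (listPerm [2,1,3]) {a | a.val ∈ ({1,3} : Set ℕ)}) := by
    refine mu_mkEmbL m _ [1,3] ?_ ?_ ?_
    · intro x; simp
    · decide
    · decide
  rw [show (r_3 1).i' = ip_3_1 from rfl] at hsum
  have h1 : m.μ ip_3_1 = m.μ (subEmb (listPerm [3,1,2]) {a | a.val ∈ ({1,2} : Set ℕ)}) := by
    refine mu_mkEmbL m _ [1,2] ?_ ?_ ?_
    · intro x; simp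
    · decide
    · decide
  rw [hL] at hsum
  rw [← h0, ← h1]
  exact hsum


abbrev i_4 : Emb (listPerm [1]) (listPerm [2,1]) :=
  mkEmb _ _ (fun n => 2) (by decide) (by decide) (by decide)
abbrev j_4 : Emb (listPerm [1]) (listPerm [1,2]) :=
  mkEmb _ _ (fun n => 2) (by decide) (by decide) (by decide)
abbrev w_4 : (listPerm [2,1]).A := ⟨1, by decide⟩
abbrev v_4 : (listPerm [1,2]).A := ⟨1, by decide⟩
abbrev ip_4_0 : Emb (listPerm [1,2]) (listPerm [2,3,1]) :=
  mkEmb _ _ (fun n => if n = 1 then 2 else 3) (by decide) (by decide) (by decide)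
abbrev jp_4_0 : Emb (listPerm [2,1]) (listPerm [2,3,1]) :=
  mkEmb _ _ (fun n => if n = 1 then 1 else 3) (by decide) (by decide) (by decide)
abbrev A_4_0 : Amalg i_4 j_4 where
  Z := listPerm [2,3,1]
  i' := ip_4_0
  j' := jp_4_0
  comm := by decide
  cover := by decide
abbrev ip_4_1 : Emb (listPerm [1,2]) (listPerm [1,3,2]) :=
  mkEmb _ _ (fun n => if n = 1 then 1 else 3) (by decide) (by decide) (by decide)
abbrev jp_4_1 : Emb (listPerm [2,1]) (listPerm [1,3,2]) :=
  mkEmb _ _ (fun n => if n = 1 then 2 else 3) (by decide) (by decide) (by decide)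
abbrev A_4_1 : Amalg i_4 j_4 where
  Z := listPerm [1,3,2]
  i' := ip_4_1
  j' := jp_4_1
  comm := by decide
  cover := by decide
abbrev r_4 : Fin 2 → Amalg i_4 j_4 := ![A_4_0, A_4_1]
abbrev sg_4 : Fin 2 → Option (Bool × Bool) := ![some (true, false), some (false, false)]
theorem s_4_0 : asig i_4 j_4 w_4 v_4 A_4_0 = some (true, false) :=
  asig_eq_some _ _ _ _ (by decide) (iff_of_true (by decide) rfl) (iff_of_false (by decide) (by simp))
theorem s_4_1 : asig i_4 j_4 w_4 v_4 A_4_1 = some (false, false) :=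
  asig_eq_some _ _ _ _ (by decide) (iff_of_false (by decide) (by simp)) (iff_of_false (by decide) (by simp))
theorem eqn_4 (k : Type) [CommRing k] (m : PMeasure k) :
    m.μ (subEmb (listPerm [2,1]) {a | a.val ∈ ({2} : Set ℕ)}) =
      m.μ (subEmb (listPerm [2,3,1]) {a | a.val ∈ ({2,3} : Set ℕ)}) + m.μ (subEmb (listPerm [1,3,2]) {a | a.val ∈ ({1,3} : Set ℕ)}) := by
  have hsum := onePoint (i := i_4) (j := j_4) (w := w_4) (v := v_4) m
    (by decide) (by decide) (by decide) (by decide) 2 r_4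
    (by
      have hs : ∀ α, asig i_4 j_4 w_4 v_4 (r_4 α) = sg_4 α := by
        intro α; fin_cases α
        · exact s_4_0
        · exact s_4_1
      have hdist : ∀ α β : Fin 2, sg_4 α = sg_4 β → α = β := by decide
      exact fun α β h => hdist α β (by rw [← hs α, ← hs β]; exact h))
    (by
      intro s hs
      rcases s with _ | ⟨b1, b2⟩
      · exact absurd hs (by rw [Cons_none]; decide)
      · cases b1 <;> cases b2
        · exact ⟨1, s_4_1⟩
        · exact absurd hs (by rw [Cons_some, C1_false, C2_true]; decide)
        · exact ⟨0, s_4_0⟩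
        · exact absurd hs (by rw [Cons_some, C1_true, C2_true]; decide)
      )
  rw [Fin.sum_univ_two] at hsum
  have hL : m.μ i_4 = m.μ (subEmb (listPerm [2,1]) {a | a.val ∈ ({2} : Set ℕ)}) := by
    refine mu_mkEmbL m _ [2] ?_ ?_ ?_
    · intro x; simp
    · decide
    · decide
  rw [show (r_4 0).i' = ip_4_0 from rfl] at hsum
  have h0 : m.μ ip_4_0 = m.μ (subEmb (listPerm [2,3,1]) {a | a.val ∈ ({2,3} : Set ℕ)}) := by
    refine mu_mkEmbL m _ [2,3] ?_ ?_ ?_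
    · intro x; simp
    · decide
    · decide
  rw [show (r_4 1).i' = ip_4_1 from rfl] at hsum
  have h1 : m.μ ip_4_1 = m.μ (subEmb (listPerm [1,3,2]) {a | a.val ∈ ({1,3} : Set ℕ)}) := by
    refine mu_mkEmbL m _ [1,3] ?_ ?_ ?_
    · intro x; simp
    · decide
    · decide
  rw [hL] at hsum
  rw [← h0, ← h1]
  exact hsum


abbrev i_5 : Emb (listPerm [1]) (listPerm [2,1]) :=
  mkEmb _ _ (fun n => 2) (by decide) (by decide) (by decide)
abbrev j_5 : Emb (listPerm [1]) (listPerm [1,2]) :=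
  mkEmb _ _ (fun n => n) (by decide) (by decide) (by decide)
abbrev w_5 : (listPerm [2,1]).A := ⟨1, by decide⟩
abbrev v_5 : (listPerm [1,2]).A := ⟨2, by decide⟩
abbrev ip_5_0 : Emb (listPerm [1,2]) (listPerm [2,1,3]) :=
  mkEmb _ _ (fun n => if n = 1 then 2 else 3) (by decide) (by decide) (by decide)
abbrev jp_5_0 : Emb (listPerm [2,1]) (listPerm [2,1,3]) :=
  mkEmb _ _ (fun n => n) (by decide) (by decide) (by decide)
abbrev A_5_0 : Amalg i_5 j_5 where
  Z := listPerm [2,1,3]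
  i' := ip_5_0
  j' := jp_5_0
  comm := by decide
  cover := by decide
abbrev ip_5_1 : Emb (listPerm [1,2]) (listPerm [2,3,1]) :=
  mkEmb _ _ (fun n => if n = 1 then 2 else 3) (by decide) (by decide) (by decide)
abbrev jp_5_1 : Emb (listPerm [2,1]) (listPerm [2,3,1]) :=
  mkEmb _ _ (fun n => n) (by decide) (by decide) (by decide)
abbrev A_5_1 : Amalg i_5 j_5 where
  Z := listPerm [2,3,1]
  i' := ip_5_1
  j' := jp_5_1
  comm := by decide
  cover := by decide
abbrev r_5 : Fin 2 → Amalg i_5 j_5 := ![A_5_0, A_5_1]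
abbrev sg_5 : Fin 2 → Option (Bool × Bool) := ![some (true, true), some (true, false)]
theorem s_5_0 : asig i_5 j_5 w_5 v_5 A_5_0 = some (true, true) :=
  asig_eq_some _ _ _ _ (by decide) (iff_of_true (by decide) rfl) (iff_of_true (by decide) rfl)
theorem s_5_1 : asig i_5 j_5 w_5 v_5 A_5_1 = some (true, false) :=
  asig_eq_some _ _ _ _ (by decide) (iff_of_true (by decide) rfl) (iff_of_false (by decide) (by simp))
theorem eqn_5 (k : Type) [CommRing k] (m : PMeasure k) :
    m.μ (subEmb (listPerm [2,1]) {a | a.val ∈ ({2} : Set ℕ)}) =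
      m.μ (subEmb (listPerm [2,1,3]) {a | a.val ∈ ({2,3} : Set ℕ)}) + m.μ (subEmb (listPerm [2,3,1]) {a | a.val ∈ ({2,3} : Set ℕ)}) := by
  have hsum := onePoint (i := i_5) (j := j_5) (w := w_5) (v := v_5) m
    (by decide) (by decide) (by decide) (by decide) 2 r_5
    (by
      have hs : ∀ α, asig i_5 j_5 w_5 v_5 (r_5 α) = sg_5 α := by
        intro α; fin_cases α
        · exact s_5_0
        · exact s_5_1
      have hdist : ∀ α β : Fin 2, sg_5 α = sg_5 β → α = β := by decide
      exact fun α β h => hdist α β (by rw [← hs α, ← hs β]; exact h))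
    (by
      intro s hs
      rcases s with _ | ⟨b1, b2⟩
      · exact absurd hs (by rw [Cons_none]; decide)
      · cases b1 <;> cases b2
        · exact absurd hs (by rw [Cons_some, C1_false, C2_false]; decide)
        · exact absurd hs (by rw [Cons_some, C1_false, C2_true]; decide)
        · exact ⟨1, s_5_1⟩
        · exact ⟨0, s_5_0⟩
      )
  rw [Fin.sum_univ_two] at hsum
  have hL : m.μ i_5 = m.μ (subEmb (listPerm [2,1]) {a | a.val ∈ ({2} : Set ℕ)}) := by
    refine mu_mkEmbL m _ [2] ?_ ?_ ?_
    · intro x; simp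
    · decide
    · decide
  rw [show (r_5 0).i' = ip_5_0 from rfl] at hsum
  have h0 : m.μ ip_5_0 = m.μ (subEmb (listPerm [2,1,3]) {a | a.val ∈ ({2,3} : Set ℕ)}) := by
    refine mu_mkEmbL m _ [2,3] ?_ ?_ ?_
    · intro x; simp
    · decide
    · decide
  rw [show (r_5 1).i' = ip_5_1 from rfl] at hsum
  have h1 : m.μ ip_5_1 = m.μ (subEmb (listPerm [2,3,1]) {a | a.val ∈ ({2,3} : Set ℕ)}) := by
    refine mu_mkEmbL m _ [2,3] ?_ ?_ ?_
    · intro x; simp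
    · decide
    · decide
  rw [hL] at hsum
  rw [← h0, ← h1]
  exact hsum


abbrev i_6 : Emb (listPerm [1,2]) (listPerm [2,1,3]) :=
  mkEmb _ _ (fun n => if n = 1 then 1 else 3) (by decide) (by decide) (by decide)
abbrev j_6 : Emb (listPerm [1,2]) (listPerm [1,3,2]) :=
  mkEmb _ _ (fun n => n) (by decide) (by decide) (by decide)
abbrev w_6 : (listPerm [2,1,3]).A := ⟨2, by decide⟩
abbrev v_6 : (listPerm [1,3,2]).A := ⟨3, by decide⟩
abbrev ip_6_0 : Emb (listPerm [1,3,2]) (listPerm [2,1,4,3]) :=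
  mkEmb _ _ (fun n => if n = 1 then 1 else if n = 2 then 3 else 4) (by decide) (by decide) (by decide)
abbrev jp_6_0 : Emb (listPerm [2,1,3]) (listPerm [2,1,4,3]) :=
  mkEmb _ _ (fun n => n) (by decide) (by decide) (by decide)
abbrev A_6_0 : Amalg i_6 j_6 where
  Z := listPerm [2,1,4,3]
  i' := ip_6_0
  j' := jp_6_0
  comm := by decide
  cover := by decide
abbrev r_6 : Fin 1 → Amalg i_6 j_6 := ![A_6_0]
abbrev sg_6 : Fin 1 → Option (Bool × Bool) := ![some (true, true)]
theorem s_6_0 : asig i_6 j_6 w_6 v_6 A_6_0 = some (true, true) :=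
  asig_eq_some _ _ _ _ (by decide) (iff_of_true (by decide) rfl) (iff_of_true (by decide) rfl)
theorem eqn_6 (k : Type) [CommRing k] (m : PMeasure k) :
    m.μ (subEmb (listPerm [2,1,3]) {a | a.val ∈ ({1,3} : Set ℕ)}) =
      m.μ (subEmb (listPerm [2,1,4,3]) {a | a.val ∈ ({1,3,4} : Set ℕ)}) := by
  have hsum := onePoint (i := i_6) (j := j_6) (w := w_6) (v := v_6) m
    (by decide) (by decide) (by decide) (by decide) 1 r_6
    (by
      have hs : ∀ α, asig i_6 j_6 w_6 v_6 (r_6 α) = sg_6 α := by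
        intro α; fin_cases α
        · exact s_6_0
      have hdist : ∀ α β : Fin 1, sg_6 α = sg_6 β → α = β := by decide
      exact fun α β h => hdist α β (by rw [← hs α, ← hs β]; exact h))
    (by
      intro s hs
      rcases s with _ | ⟨b1, b2⟩
      · exact absurd hs (by rw [Cons_none]; decide)
      · cases b1 <;> cases b2
        · exact absurd hs (by rw [Cons_some, C1_false, C2_false]; decide)
        · exact absurd hs (by rw [Cons_some, C1_false, C2_true]; decide)
        · exact absurd hs (by rw [Cons_some, C1_true, C2_false]; decide)
        · exact ⟨0, s_6_0⟩
      )
  rw [Fin.sum_univ_one] at hsum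
  have hL : m.μ i_6 = m.μ (subEmb (listPerm [2,1,3]) {a | a.val ∈ ({1,3} : Set ℕ)}) := by
    refine mu_mkEmbL m _ [1,3] ?_ ?_ ?_
    · intro x; simp
    · decide
    · decide
  rw [show (r_6 0).i' = ip_6_0 from rfl] at hsum
  have h0 : m.μ ip_6_0 = m.μ (subEmb (listPerm [2,1,4,3]) {a | a.val ∈ ({1,3,4} : Set ℕ)}) := by
    refine mu_mkEmbL m _ [1,3,4] ?_ ?_ ?_
    · intro x; simp
    · decide
    · decide
  rw [hL] at hsum
  rw [← h0]
  exact hsum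


abbrev i_7 : Emb (listPerm [1,2]) (listPerm [2,1,3]) :=
  mkEmb _ _ (fun n => if n = 1 then 2 else 3) (by decide) (by decide) (by decide)
abbrev j_7 : Emb (listPerm [1,2]) (listPerm [1,3,2]) :=
  mkEmb _ _ (fun n => if n = 1 then 1 else 3) (by decide) (by decide) (by decide)
abbrev w_7 : (listPerm [2,1,3]).A := ⟨1, by decide⟩
abbrev v_7 : (listPerm [1,3,2]).A := ⟨2, by decide⟩
abbrev ip_7_0 : Emb (listPerm [1,3,2]) (listPerm [2,1,4,3]) :=
  mkEmb _ _ (fun n => if n = 1 then 2 else if n = 2 then 3 else 4) (by decide) (by decide) (by decide)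
abbrev jp_7_0 : Emb (listPerm [2,1,3]) (listPerm [2,1,4,3]) :=
  mkEmb _ _ (fun n => if n = 1 then 1 else if n = 2 then 2 else 4) (by decide) (by decide) (by decide)
abbrev A_7_0 : Amalg i_7 j_7 where
  Z := listPerm [2,1,4,3]
  i' := ip_7_0
  j' := jp_7_0
  comm := by decide
  cover := by decide
abbrev r_7 : Fin 1 → Amalg i_7 j_7 := ![A_7_0]
abbrev sg_7 : Fin 1 → Option (Bool × Bool) := ![some (true, true)]
theorem s_7_0 : asig i_7 j_7 w_7 v_7 A_7_0 = some (true, true) :=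
  asig_eq_some _ _ _ _ (by decide) (iff_of_true (by decide) rfl) (iff_of_true (by decide) rfl)
theorem eqn_7 (k : Type) [CommRing k] (m : PMeasure k) :
    m.μ (subEmb (listPerm [2,1,3]) {a | a.val ∈ ({2,3} : Set ℕ)}) =
      m.μ (subEmb (listPerm [2,1,4,3]) {a | a.val ∈ ({2,3,4} : Set ℕ)}) := by
  have hsum := onePoint (i := i_7) (j := j_7) (w := w_7) (v := v_7) m
    (by decide) (by decide) (by decide) (by decide) 1 r_7
    (by
      have hs : ∀ α, asig i_7 j_7 w_7 v_7 (r_7 α) = sg_7 α := by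
        intro α; fin_cases α
        · exact s_7_0
      have hdist : ∀ α β : Fin 1, sg_7 α = sg_7 β → α = β := by decide
      exact fun α β h => hdist α β (by rw [← hs α, ← hs β]; exact h))
    (by
      intro s hs
      rcases s with _ | ⟨b1, b2⟩
      · exact absurd hs (by rw [Cons_none]; decide)
      · cases b1 <;> cases b2
        · exact absurd hs (by rw [Cons_some, C1_false, C2_false]; decide)
        · exact absurd hs (by rw [Cons_some, C1_false, C2_true]; decide)
        · exact absurd hs (by rw [Cons_some, C1_true, C2_false]; decide)
        · exact ⟨0, s_7_0⟩
      )
  rw [Fin.sum_univ_one] at hsum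
  have hL : m.μ i_7 = m.μ (subEmb (listPerm [2,1,3]) {a | a.val ∈ ({2,3} : Set ℕ)}) := by
    refine mu_mkEmbL m _ [2,3] ?_ ?_ ?_
    · intro x; simp
    · decide
    · decide
  rw [show (r_7 0).i' = ip_7_0 from rfl] at hsum
  have h0 : m.μ ip_7_0 = m.μ (subEmb (listPerm [2,1,4,3]) {a | a.val ∈ ({2,3,4} : Set ℕ)}) := by
    refine mu_mkEmbL m _ [2,3,4] ?_ ?_ ?_
    · intro x; simp
    · decide
    · decide
  rw [hL] at hsum
  rw [← h0]
  exact hsum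


abbrev i_8 : Emb (listPerm [2,1]) (listPerm [1,3,2]) :=
  mkEmb _ _ (fun n => if n = 1 then 2 else 3) (by decide) (by decide) (by decide)
abbrev j_8 : Emb (listPerm [2,1]) (listPerm [1,3,2]) :=
  mkEmb _ _ (fun n => if n = 1 then 2 else 3) (by decide) (by decide) (by decide)
abbrev w_8 : (listPerm [1,3,2]).A := ⟨1, by decide⟩
abbrev v_8 : (listPerm [1,3,2]).A := ⟨1, by decide⟩
abbrev ip_8_0 : Emb (listPerm [1,3,2]) (listPerm [1,3,2]) :=
  mkEmb _ _ (fun n => n) (by decide) (by decide) (by decide)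
abbrev jp_8_0 : Emb (listPerm [1,3,2]) (listPerm [1,3,2]) :=
  mkEmb _ _ (fun n => n) (by decide) (by decide) (by decide)
abbrev A_8_0 : Amalg i_8 j_8 where
  Z := listPerm [1,3,2]
  i' := ip_8_0
  j' := jp_8_0
  comm := by decide
  cover := by decide
abbrev ip_8_1 : Emb (listPerm [1,3,2]) (listPerm [1,2,4,3]) :=
  mkEmb _ _ (fun n => if n = 1 then 2 else if n = 2 then 3 else 4) (by decide) (by decide) (by decide)
abbrev jp_8_1 : Emb (listPerm [1,3,2]) (listPerm [1,2,4,3]) :=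
  mkEmb _ _ (fun n => if n = 1 then 1 else if n = 2 then 3 else 4) (by decide) (by decide) (by decide)
abbrev A_8_1 : Amalg i_8 j_8 where
  Z := listPerm [1,2,4,3]
  i' := ip_8_1
  j' := jp_8_1
  comm := by decide
  cover := by decide
abbrev ip_8_2 : Emb (listPerm [1,3,2]) (listPerm [2,1,4,3]) :=
  mkEmb _ _ (fun n => if n = 1 then 1 else if n = 2 then 3 else 4) (by decide) (by decide) (by decide)
abbrev jp_8_2 : Emb (listPerm [1,3,2]) (listPerm [2,1,4,3]) :=
  mkEmb _ _ (fun n => if n = 1 then 2 else if n = 2 then 3 else 4) (by decide) (by decide) (by decide)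
abbrev A_8_2 : Amalg i_8 j_8 where
  Z := listPerm [2,1,4,3]
  i' := ip_8_2
  j' := jp_8_2
  comm := by decide
  cover := by decide
abbrev ip_8_3 : Emb (listPerm [1,3,2]) (listPerm [2,1,4,3]) :=
  mkEmb _ _ (fun n => if n = 1 then 2 else if n = 2 then 3 else 4) (by decide) (by decide) (by decide)
abbrev jp_8_3 : Emb (listPerm [1,3,2]) (listPerm [2,1,4,3]) :=
  mkEmb _ _ (fun n => if n = 1 then 1 else if n = 2 then 3 else 4) (by decide) (by decide) (by decide)
abbrev A_8_3 : Amalg i_8 j_8 where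
  Z := listPerm [2,1,4,3]
  i' := ip_8_3
  j' := jp_8_3
  comm := by decide
  cover := by decide
abbrev ip_8_4 : Emb (listPerm [1,3,2]) (listPerm [1,2,4,3]) :=
  mkEmb _ _ (fun n => if n = 1 then 1 else if n = 2 then 3 else 4) (by decide) (by decide) (by decide)
abbrev jp_8_4 : Emb (listPerm [1,3,2]) (listPerm [1,2,4,3]) :=
  mkEmb _ _ (fun n => if n = 1 then 2 else if n = 2 then 3 else 4) (by decide) (by decide) (by decide)
abbrev A_8_4 : Amalg i_8 j_8 where
  Z := listPerm [1,2,4,3]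
  i' := ip_8_4
  j' := jp_8_4
  comm := by decide
  cover := by decide
abbrev r_8 : Fin 5 → Amalg i_8 j_8 := ![A_8_0, A_8_1, A_8_2, A_8_3, A_8_4]
abbrev sg_8 : Fin 5 → Option (Bool × Bool) := ![none, some (true, true), some (false, true), some (true, false), some (false, false)]
theorem s_8_0 : asig i_8 j_8 w_8 v_8 A_8_0 = none :=
  asig_eq_none _ _ _ _ (by decide)
theorem s_8_1 : asig i_8 j_8 w_8 v_8 A_8_1 = some (true, true) :=
  asig_eq_some _ _ _ _ (by decide) (iff_of_true (by decide) rfl) (iff_of_true (by decide) rfl)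
theorem s_8_2 : asig i_8 j_8 w_8 v_8 A_8_2 = some (false, true) :=
  asig_eq_some _ _ _ _ (by decide) (iff_of_false (by decide) (by simp)) (iff_of_true (by decide) rfl)
theorem s_8_3 : asig i_8 j_8 w_8 v_8 A_8_3 = some (true, false) :=
  asig_eq_some _ _ _ _ (by decide) (iff_of_true (by decide) rfl) (iff_of_false (by decide) (by simp))
theorem s_8_4 : asig i_8 j_8 w_8 v_8 A_8_4 = some (false, false) :=
  asig_eq_some _ _ _ _ (by decide) (iff_of_false (by decide) (by simp)) (iff_of_false (by decide) (by simp))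
theorem eqn_8 (k : Type) [CommRing k] (m : PMeasure k) :
    m.μ (subEmb (listPerm [1,3,2]) {a | a.val ∈ ({2,3} : Set ℕ)}) =
      (1 : k) + m.μ (subEmb (listPerm [1,2,4,3]) {a | a.val ∈ ({2,3,4} : Set ℕ)}) + m.μ (subEmb (listPerm [2,1,4,3]) {a | a.val ∈ ({1,3,4} : Set ℕ)}) + m.μ (subEmb (listPerm [2,1,4,3]) {a | a.val ∈ ({2,3,4} : Set ℕ)}) + m.μ (subEmb (listPerm [1,2,4,3]) {a | a.val ∈ ({1,3,4} : Set ℕ)}) := by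
  have hsum := onePoint (i := i_8) (j := j_8) (w := w_8) (v := v_8) m
    (by decide) (by decide) (by decide) (by decide) 5 r_8
    (by
      have hs : ∀ α, asig i_8 j_8 w_8 v_8 (r_8 α) = sg_8 α := by
        intro α; fin_cases α
        · exact s_8_0
        · exact s_8_1
        · exact s_8_2
        · exact s_8_3
        · exact s_8_4
      have hdist : ∀ α β : Fin 5, sg_8 α = sg_8 β → α = β := by decide
      exact fun α β h => hdist α β (by rw [← hs α, ← hs β]; exact h))
    (by
      intro s hs
      rcases s with _ | ⟨b1, b2⟩
      · exact ⟨0, s_8_0⟩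
      · cases b1 <;> cases b2
        · exact ⟨4, s_8_4⟩
        · exact ⟨2, s_8_2⟩
        · exact ⟨3, s_8_3⟩
        · exact ⟨1, s_8_1⟩
      )
  rw [Fin.sum_univ_five] at hsum
  have hL : m.μ i_8 = m.μ (subEmb (listPerm [1,3,2]) {a | a.val ∈ ({2,3} : Set ℕ)}) := by
    refine mu_mkEmbL m _ [2,3] ?_ ?_ ?_
    · intro x; simp
    · decide
    · decide
  rw [show (r_8 0).i' = ip_8_0 from rfl] at hsum
  have h0 : m.μ ip_8_0 = (1 : k) := by
    apply m.iso_one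
    unfold Function.Surjective
    decide
  rw [show (r_8 1).i' = ip_8_1 from rfl] at hsum
  have h1 : m.μ ip_8_1 = m.μ (subEmb (listPerm [1,2,4,3]) {a | a.val ∈ ({2,3,4} : Set ℕ)}) := by
    refine mu_mkEmbL m _ [2,3,4] ?_ ?_ ?_
    · intro x; simp
    · decide
    · decide
  rw [show (r_8 2).i' = ip_8_2 from rfl] at hsum
  have h2 : m.μ ip_8_2 = m.μ (subEmb (listPerm [2,1,4,3]) {a | a.val ∈ ({1,3,4} : Set ℕ)}) := by
    refine mu_mkEmbL m _ [1,3,4] ?_ ?_ ?_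
    · intro x; simp
    · decide
    · decide
  rw [show (r_8 3).i' = ip_8_3 from rfl] at hsum
  have h3 : m.μ ip_8_3 = m.μ (subEmb (listPerm [2,1,4,3]) {a | a.val ∈ ({2,3,4} : Set ℕ)}) := by
    refine mu_mkEmbL m _ [2,3,4] ?_ ?_ ?_
    · intro x; simp
    · decide
    · decide
  rw [show (r_8 4).i' = ip_8_4 from rfl] at hsum
  have h4 : m.μ ip_8_4 = m.μ (subEmb (listPerm [1,2,4,3]) {a | a.val ∈ ({1,3,4} : Set ℕ)}) := by
    refine mu_mkEmbL m _ [1,3,4] ?_ ?_ ?_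
    · intro x; simp
    · decide
    · decide
  rw [hL] at hsum
  rw [← h0, ← h1, ← h2, ← h3, ← h4]
  exact hsum


abbrev i_9 : Emb (listPerm [2,1]) (listPerm [1,3,2]) :=
  mkEmb _ _ (fun n => if n = 1 then 2 else 3) (by decide) (by decide) (by decide)
abbrev j_9 : Emb (listPerm [2,1]) (listPerm [2,1,3]) :=
  mkEmb _ _ (fun n => n) (by decide) (by decide) (by decide)
abbrev w_9 : (listPerm [1,3,2]).A := ⟨1, by decide⟩
abbrev v_9 : (listPerm [2,1,3]).A := ⟨3, by decide⟩
abbrev ip_9_0 : Emb (listPerm [2,1,3]) (listPerm [1,3,2,4]) :=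
  mkEmb _ _ (fun n => if n = 1 then 2 else if n = 2 then 3 else 4) (by decide) (by decide) (by decide)
abbrev jp_9_0 : Emb (listPerm [1,3,2]) (listPerm [1,3,2,4]) :=
  mkEmb _ _ (fun n => n) (by decide) (by decide) (by decide)
abbrev A_9_0 : Amalg i_9 j_9 where
  Z := listPerm [1,3,2,4]
  i' := ip_9_0
  j' := jp_9_0
  comm := by decide
  cover := by decide
abbrev r_9 : Fin 1 → Amalg i_9 j_9 := ![A_9_0]
abbrev sg_9 : Fin 1 → Option (Bool × Bool) := ![some (true, true)]
theorem s_9_0 : asig i_9 j_9 w_9 v_9 A_9_0 = some (true, true) :=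
  asig_eq_some _ _ _ _ (by decide) (iff_of_true (by decide) rfl) (iff_of_true (by decide) rfl)
theorem eqn_9 (k : Type) [CommRing k] (m : PMeasure k) :
    m.μ (subEmb (listPerm [1,3,2]) {a | a.val ∈ ({2,3} : Set ℕ)}) =
      m.μ (subEmb (listPerm [1,3,2,4]) {a | a.val ∈ ({2,3,4} : Set ℕ)}) := by
  have hsum := onePoint (i := i_9) (j := j_9) (w := w_9) (v := v_9) m
    (by decide) (by decide) (by decide) (by decide) 1 r_9
    (by
      have hs : ∀ α, asig i_9 j_9 w_9 v_9 (r_9 α) = sg_9 α := by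
        intro α; fin_cases α
        · exact s_9_0
      have hdist : ∀ α β : Fin 1, sg_9 α = sg_9 β → α = β := by decide
      exact fun α β h => hdist α β (by rw [← hs α, ← hs β]; exact h))
    (by
      intro s hs
      rcases s with _ | ⟨b1, b2⟩
      · exact absurd hs (by rw [Cons_none]; decide)
      · cases b1 <;> cases b2
        · exact absurd hs (by rw [Cons_some, C1_false, C2_false]; decide)
        · exact absurd hs (by rw [Cons_some, C1_false, C2_true]; decide)
        · exact absurd hs (by rw [Cons_some, C1_true, C2_false]; decide)
        · exact ⟨0, s_9_0⟩
      )
  rw [Fin.sum_univ_one] at hsum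
  have hL : m.μ i_9 = m.μ (subEmb (listPerm [1,3,2]) {a | a.val ∈ ({2,3} : Set ℕ)}) := by
    refine mu_mkEmbL m _ [2,3] ?_ ?_ ?_
    · intro x; simp
    · decide
    · decide
  rw [show (r_9 0).i' = ip_9_0 from rfl] at hsum
  have h0 : m.μ ip_9_0 = m.μ (subEmb (listPerm [1,3,2,4]) {a | a.val ∈ ({2,3,4} : Set ℕ)}) := by
    refine mu_mkEmbL m _ [2,3,4] ?_ ?_ ?_
    · intro x; simp
    · decide
    · decide
  rw [hL] at hsum
  rw [← h0]
  exact hsum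


abbrev i_10 : Emb (listPerm [2,1]) (listPerm [3,2,1]) :=
  mkEmb _ _ (fun n => if n = 1 then 1 else 3) (by decide) (by decide) (by decide)
abbrev j_10 : Emb (listPerm [2,1]) (listPerm [2,1,3]) :=
  mkEmb _ _ (fun n => n) (by decide) (by decide) (by decide)
abbrev w_10 : (listPerm [3,2,1]).A := ⟨2, by decide⟩
abbrev v_10 : (listPerm [2,1,3]).A := ⟨3, by decide⟩
abbrev ip_10_0 : Emb (listPerm [2,1,3]) (listPerm [3,2,1,4]) :=
  mkEmb _ _ (fun n => if n = 1 then 1 else if n = 2 then 3 else 4) (by decide) (by decide) (by decide)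
abbrev jp_10_0 : Emb (listPerm [3,2,1]) (listPerm [3,2,1,4]) :=
  mkEmb _ _ (fun n => n) (by decide) (by decide) (by decide)
abbrev A_10_0 : Amalg i_10 j_10 where
  Z := listPerm [3,2,1,4]
  i' := ip_10_0
  j' := jp_10_0
  comm := by decide
  cover := by decide
abbrev r_10 : Fin 1 → Amalg i_10 j_10 := ![A_10_0]
abbrev sg_10 : Fin 1 → Option (Bool × Bool) := ![some (true, true)]
theorem s_10_0 : asig i_10 j_10 w_10 v_10 A_10_0 = some (true, true) :=
  asig_eq_some _ _ _ _ (by decide) (iff_of_true (by decide) rfl) (iff_of_true (by decide) rfl)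
theorem eqn_10 (k : Type) [CommRing k] (m : PMeasure k) :
    m.μ (subEmb (listPerm [3,2,1]) {a | a.val ∈ ({1,3} : Set ℕ)}) =
      m.μ (subEmb (listPerm [3,2,1,4]) {a | a.val ∈ ({1,3,4} : Set ℕ)}) := by
  have hsum := onePoint (i := i_10) (j := j_10) (w := w_10) (v := v_10) m
    (by decide) (by decide) (by decide) (by decide) 1 r_10
    (by
      have hs : ∀ α, asig i_10 j_10 w_10 v_10 (r_10 α) = sg_10 α := by
        intro α; fin_cases α
        · exact s_10_0
      have hdist : ∀ α β : Fin 1, sg_10 α = sg_10 β → α = β := by decide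
      exact fun α β h => hdist α β (by rw [← hs α, ← hs β]; exact h))
    (by
      intro s hs
      rcases s with _ | ⟨b1, b2⟩
      · exact absurd hs (by rw [Cons_none]; decide)
      · cases b1 <;> cases b2
        · exact absurd hs (by rw [Cons_some, C1_false, C2_false]; decide)
        · exact absurd hs (by rw [Cons_some, C1_false, C2_true]; decide)
        · exact absurd hs (by rw [Cons_some, C1_true, C2_false]; decide)
        · exact ⟨0, s_10_0⟩
      )
  rw [Fin.sum_univ_one] at hsum
  have hL : m.μ i_10 = m.μ (subEmb (listPerm [3,2,1]) {a | a.val ∈ ({1,3} : Set ℕ)}) := by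
    refine mu_mkEmbL m _ [1,3] ?_ ?_ ?_
    · intro x; simp
    · decide
    · decide
  rw [show (r_10 0).i' = ip_10_0 from rfl] at hsum
  have h0 : m.μ ip_10_0 = m.μ (subEmb (listPerm [3,2,1,4]) {a | a.val ∈ ({1,3,4} : Set ℕ)}) := by
    refine mu_mkEmbL m _ [1,3,4] ?_ ?_ ?_
    · intro x; simp
    · decide
    · decide
  rw [hL] at hsum
  rw [← h0]
  exact hsum


abbrev i_11 : Emb (listPerm [1,3,2]) (listPerm [1,2,4,3]) :=
  mkEmb _ _ (fun n => if n = 1 then 2 else if n = 2 then 3 else 4) (by decide) (by decide) (by decide)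
abbrev j_11 : Emb (listPerm [1,3,2]) (listPerm [2,1,4,3]) :=
  mkEmb _ _ (fun n => if n = 1 then 1 else if n = 2 then 3 else 4) (by decide) (by decide) (by decide)
abbrev w_11 : (listPerm [1,2,4,3]).A := ⟨1, by decide⟩
abbrev v_11 : (listPerm [2,1,4,3]).A := ⟨2, by decide⟩
abbrev ip_11_0 : Emb (listPerm [2,1,4,3]) (listPerm [1,3,2,5,4]) :=
  mkEmb _ _ (fun n => if n = 1 then 2 else if n = 2 then 3 else if n = 3 then 4 else 5) (by decide) (by decide) (by decide)
abbrev jp_11_0 : Emb (listPerm [1,2,4,3]) (listPerm [1,3,2,5,4]) :=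
  mkEmb _ _ (fun n => if n = 1 then 1 else if n = 2 then 2 else if n = 3 then 4 else 5) (by decide) (by decide) (by decide)
abbrev A_11_0 : Amalg i_11 j_11 where
  Z := listPerm [1,3,2,5,4]
  i' := ip_11_0
  j' := jp_11_0
  comm := by decide
  cover := by decide
abbrev ip_11_1 : Emb (listPerm [2,1,4,3]) (listPerm [3,1,2,5,4]) :=
  mkEmb _ _ (fun n => if n = 1 then 2 else if n = 2 then 3 else if n = 3 then 4 else 5) (by decide) (by decide) (by decide)
abbrev jp_11_1 : Emb (listPerm [1,2,4,3]) (listPerm [3,1,2,5,4]) :=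
  mkEmb _ _ (fun n => if n = 1 then 1 else if n = 2 then 2 else if n = 3 then 4 else 5) (by decide) (by decide) (by decide)
abbrev A_11_1 : Amalg i_11 j_11 where
  Z := listPerm [3,1,2,5,4]
  i' := ip_11_1
  j' := jp_11_1
  comm := by decide
  cover := by decide
abbrev r_11 : Fin 2 → Amalg i_11 j_11 := ![A_11_0, A_11_1]
abbrev sg_11 : Fin 2 → Option (Bool × Bool) := ![some (true, true), some (true, false)]
theorem s_11_0 : asig i_11 j_11 w_11 v_11 A_11_0 = some (true, true) :=
  asig_eq_some _ _ _ _ (by decide) (iff_of_true (by decide) rfl) (iff_of_true (by decide) rfl)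
theorem s_11_1 : asig i_11 j_11 w_11 v_11 A_11_1 = some (true, false) :=
  asig_eq_some _ _ _ _ (by decide) (iff_of_true (by decide) rfl) (iff_of_false (by decide) (by simp))
theorem eqn_11 (k : Type) [CommRing k] (m : PMeasure k) :
    m.μ (subEmb (listPerm [1,2,4,3]) {a | a.val ∈ ({2,3,4} : Set ℕ)}) =
      m.μ (subEmb (listPerm [1,3,2,5,4]) {a | a.val ∈ ({2,3,4,5} : Set ℕ)}) + m.μ (subEmb (listPerm [3,1,2,5,4]) {a | a.val ∈ ({2,3,4,5} : Set ℕ)}) := by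
  have hsum := onePoint (i := i_11) (j := j_11) (w := w_11) (v := v_11) m
    (by decide) (by decide) (by decide) (by decide) 2 r_11
    (by
      have hs : ∀ α, asig i_11 j_11 w_11 v_11 (r_11 α) = sg_11 α := by
        intro α; fin_cases α
        · exact s_11_0
        · exact s_11_1
      have hdist : ∀ α β : Fin 2, sg_11 α = sg_11 β → α = β := by decide
      exact fun α β h => hdist α β (by rw [← hs α, ← hs β]; exact h))
    (by
      intro s hs
      rcases s with _ | ⟨b1, b2⟩
      · exact absurd hs (by rw [Cons_none]; decide)
      · cases b1 <;> cases b2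
        · exact absurd hs (by rw [Cons_some, C1_false, C2_false]; decide)
        · exact absurd hs (by rw [Cons_some, C1_false, C2_true]; decide)
        · exact ⟨1, s_11_1⟩
        · exact ⟨0, s_11_0⟩
      )
  rw [Fin.sum_univ_two] at hsum
  have hL : m.μ i_11 = m.μ (subEmb (listPerm [1,2,4,3]) {a | a.val ∈ ({2,3,4} : Set ℕ)}) := by
    refine mu_mkEmbL m _ [2,3,4] ?_ ?_ ?_
    · intro x; simp
    · decide
    · decide
  rw [show (r_11 0).i' = ip_11_0 from rfl] at hsum
  have h0 : m.μ ip_11_0 = m.μ (subEmb (listPerm [1,3,2,5,4]) {a | a.val ∈ ({2,3,4,5} : Set ℕ)}) := by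
    refine mu_mkEmbL m _ [2,3,4,5] ?_ ?_ ?_
    · intro x; simp
    · decide
    · decide
  rw [show (r_11 1).i' = ip_11_1 from rfl] at hsum
  have h1 : m.μ ip_11_1 = m.μ (subEmb (listPerm [3,1,2,5,4]) {a | a.val ∈ ({2,3,4,5} : Set ℕ)}) := by
    refine mu_mkEmbL m _ [2,3,4,5] ?_ ?_ ?_
    · intro x; simp
    · decide
    · decide
  rw [hL] at hsum
  rw [← h0, ← h1]
  exact hsum


abbrev i_12 : Emb (listPerm [1,3,2]) (listPerm [2,1,4,3]) :=
  mkEmb _ _ (fun n => if n = 1 then 2 else if n = 2 then 3 else 4) (by decide) (by decide) (by decide)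
abbrev j_12 : Emb (listPerm [1,3,2]) (listPerm [2,1,4,3]) :=
  mkEmb _ _ (fun n => if n = 1 then 1 else if n = 2 then 3 else 4) (by decide) (by decide) (by decide)
abbrev w_12 : (listPerm [2,1,4,3]).A := ⟨1, by decide⟩
abbrev v_12 : (listPerm [2,1,4,3]).A := ⟨2, by decide⟩
abbrev ip_12_0 : Emb (listPerm [2,1,4,3]) (listPerm [3,2,1,5,4]) :=
  mkEmb _ _ (fun n => if n = 1 then 2 else if n = 2 then 3 else if n = 3 then 4 else 5) (by decide) (by decide) (by decide)
abbrev jp_12_0 : Emb (listPerm [2,1,4,3]) (listPerm [3,2,1,5,4]) :=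
  mkEmb _ _ (fun n => if n = 1 then 1 else if n = 2 then 2 else if n = 3 then 4 else 5) (by decide) (by decide) (by decide)
abbrev A_12_0 : Amalg i_12 j_12 where
  Z := listPerm [3,2,1,5,4]
  i' := ip_12_0
  j' := jp_12_0
  comm := by decide
  cover := by decide
abbrev r_12 : Fin 1 → Amalg i_12 j_12 := ![A_12_0]
abbrev sg_12 : Fin 1 → Option (Bool × Bool) := ![some (true, false)]
theorem s_12_0 : asig i_12 j_12 w_12 v_12 A_12_0 = some (true, false) :=
  asig_eq_some _ _ _ _ (by decide) (iff_of_true (by decide) rfl) (iff_of_false (by decide) (by simp))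
theorem eqn_12 (k : Type) [CommRing k] (m : PMeasure k) :
    m.μ (subEmb (listPerm [2,1,4,3]) {a | a.val ∈ ({2,3,4} : Set ℕ)}) =
      m.μ (subEmb (listPerm [3,2,1,5,4]) {a | a.val ∈ ({2,3,4,5} : Set ℕ)}) := by
  have hsum := onePoint (i := i_12) (j := j_12) (w := w_12) (v := v_12) m
    (by decide) (by decide) (by decide) (by decide) 1 r_12
    (by
      have hs : ∀ α, asig i_12 j_12 w_12 v_12 (r_12 α) = sg_12 α := by
        intro α; fin_cases α
        · exact s_12_0
      have hdist : ∀ α β : Fin 1, sg_12 α = sg_12 β → α = β := by decide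
      exact fun α β h => hdist α β (by rw [← hs α, ← hs β]; exact h))
    (by
      intro s hs
      rcases s with _ | ⟨b1, b2⟩
      · exact absurd hs (by rw [Cons_none]; decide)
      · cases b1 <;> cases b2
        · exact absurd hs (by rw [Cons_some, C1_false, C2_false]; decide)
        · exact absurd hs (by rw [Cons_some, C1_false, C2_true]; decide)
        · exact ⟨0, s_12_0⟩
        · exact absurd hs (by rw [Cons_some, C1_true, C2_true]; decide)
      )
  rw [Fin.sum_univ_one] at hsum
  have hL : m.μ i_12 = m.μ (subEmb (listPerm [2,1,4,3]) {a | a.val ∈ ({2,3,4} : Set ℕ)}) := by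
    refine mu_mkEmbL m _ [2,3,4] ?_ ?_ ?_
    · intro x; simp
    · decide
    · decide
  rw [show (r_12 0).i' = ip_12_0 from rfl] at hsum
  have h0 : m.μ ip_12_0 = m.μ (subEmb (listPerm [3,2,1,5,4]) {a | a.val ∈ ({2,3,4,5} : Set ℕ)}) := by
    refine mu_mkEmbL m _ [2,3,4,5] ?_ ?_ ?_
    · intro x; simp
    · decide
    · decide
  rw [hL] at hsum
  rw [← h0]
  exact hsum


abbrev i_13 : Emb (listPerm [1,3,2]) (listPerm [2,1,4,3]) :=
  mkEmb _ _ (fun n => if n = 1 then 2 else if n = 2 then 3 else 4) (by decide) (by decide) (by decide)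
abbrev j_13 : Emb (listPerm [1,3,2]) (listPerm [2,1,4,3]) :=
  mkEmb _ _ (fun n => if n = 1 then 2 else if n = 2 then 3 else 4) (by decide) (by decide) (by decide)
abbrev w_13 : (listPerm [2,1,4,3]).A := ⟨1, by decide⟩
abbrev v_13 : (listPerm [2,1,4,3]).A := ⟨1, by decide⟩
abbrev ip_13_0 : Emb (listPerm [2,1,4,3]) (listPerm [2,1,4,3]) :=
  mkEmb _ _ (fun n => n) (by decide) (by decide) (by decide)
abbrev jp_13_0 : Emb (listPerm [2,1,4,3]) (listPerm [2,1,4,3]) :=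
  mkEmb _ _ (fun n => n) (by decide) (by decide) (by decide)
abbrev A_13_0 : Amalg i_13 j_13 where
  Z := listPerm [2,1,4,3]
  i' := ip_13_0
  j' := jp_13_0
  comm := by decide
  cover := by decide
abbrev ip_13_1 : Emb (listPerm [2,1,4,3]) (listPerm [3,1,2,5,4]) :=
  mkEmb _ _ (fun n => if n = 1 then 2 else if n = 2 then 3 else if n = 3 then 4 else 5) (by decide) (by decide) (by decide)
abbrev jp_13_1 : Emb (listPerm [2,1,4,3]) (listPerm [3,1,2,5,4]) :=
  mkEmb _ _ (fun n => if n = 1 then 1 else if n = 2 then 3 else if n = 3 then 4 else 5) (by decide) (by decide) (by decide)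
abbrev A_13_1 : Amalg i_13 j_13 where
  Z := listPerm [3,1,2,5,4]
  i' := ip_13_1
  j' := jp_13_1
  comm := by decide
  cover := by decide
abbrev ip_13_2 : Emb (listPerm [2,1,4,3]) (listPerm [3,2,1,5,4]) :=
  mkEmb _ _ (fun n => if n = 1 then 1 else if n = 2 then 3 else if n = 3 then 4 else 5) (by decide) (by decide) (by decide)
abbrev jp_13_2 : Emb (listPerm [2,1,4,3]) (listPerm [3,2,1,5,4]) :=
  mkEmb _ _ (fun n => if n = 1 then 2 else if n = 2 then 3 else if n = 3 then 4 else 5) (by decide) (by decide) (by decide)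
abbrev A_13_2 : Amalg i_13 j_13 where
  Z := listPerm [3,2,1,5,4]
  i' := ip_13_2
  j' := jp_13_2
  comm := by decide
  cover := by decide
abbrev ip_13_3 : Emb (listPerm [2,1,4,3]) (listPerm [3,2,1,5,4]) :=
  mkEmb _ _ (fun n => if n = 1 then 2 else if n = 2 then 3 else if n = 3 then 4 else 5) (by decide) (by decide) (by decide)
abbrev jp_13_3 : Emb (listPerm [2,1,4,3]) (listPerm [3,2,1,5,4]) :=
  mkEmb _ _ (fun n => if n = 1 then 1 else if n = 2 then 3 else if n = 3 then 4 else 5) (by decide) (by decide) (by decide)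
abbrev A_13_3 : Amalg i_13 j_13 where
  Z := listPerm [3,2,1,5,4]
  i' := ip_13_3
  j' := jp_13_3
  comm := by decide
  cover := by decide
abbrev ip_13_4 : Emb (listPerm [2,1,4,3]) (listPerm [3,1,2,5,4]) :=
  mkEmb _ _ (fun n => if n = 1 then 1 else if n = 2 then 3 else if n = 3 then 4 else 5) (by decide) (by decide) (by decide)
abbrev jp_13_4 : Emb (listPerm [2,1,4,3]) (listPerm [3,1,2,5,4]) :=
  mkEmb _ _ (fun n => if n = 1 then 2 else if n = 2 then 3 else if n = 3 then 4 else 5) (by decide) (by decide) (by decide)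
abbrev A_13_4 : Amalg i_13 j_13 where
  Z := listPerm [3,1,2,5,4]
  i' := ip_13_4
  j' := jp_13_4
  comm := by decide
  cover := by decide
abbrev r_13 : Fin 5 → Amalg i_13 j_13 := ![A_13_0, A_13_1, A_13_2, A_13_3, A_13_4]
abbrev sg_13 : Fin 5 → Option (Bool × Bool) := ![none, some (true, true), some (false, true), some (true, false), some (false, false)]
theorem s_13_0 : asig i_13 j_13 w_13 v_13 A_13_0 = none :=
  asig_eq_none _ _ _ _ (by decide)
theorem s_13_1 : asig i_13 j_13 w_13 v_13 A_13_1 = some (true, true) :=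
  asig_eq_some _ _ _ _ (by decide) (iff_of_true (by decide) rfl) (iff_of_true (by decide) rfl)
theorem s_13_2 : asig i_13 j_13 w_13 v_13 A_13_2 = some (false, true) :=
  asig_eq_some _ _ _ _ (by decide) (iff_of_false (by decide) (by simp)) (iff_of_true (by decide) rfl)
theorem s_13_3 : asig i_13 j_13 w_13 v_13 A_13_3 = some (true, false) :=
  asig_eq_some _ _ _ _ (by decide) (iff_of_true (by decide) rfl) (iff_of_false (by decide) (by simp))
theorem s_13_4 : asig i_13 j_13 w_13 v_13 A_13_4 = some (false, false) :=
  asig_eq_some _ _ _ _ (by decide) (iff_of_false (by decide) (by simp)) (iff_of_false (by decide) (by simp))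
theorem eqn_13 (k : Type) [CommRing k] (m : PMeasure k) :
    m.μ (subEmb (listPerm [2,1,4,3]) {a | a.val ∈ ({2,3,4} : Set ℕ)}) =
      (1 : k) + m.μ (subEmb (listPerm [3,1,2,5,4]) {a | a.val ∈ ({2,3,4,5} : Set ℕ)}) + m.μ (subEmb (listPerm [3,2,1,5,4]) {a | a.val ∈ ({1,3,4,5} : Set ℕ)}) + m.μ (subEmb (listPerm [3,2,1,5,4]) {a | a.val ∈ ({2,3,4,5} : Set ℕ)}) + m.μ (subEmb (listPerm [3,1,2,5,4]) {a | a.val ∈ ({1,3,4,5} : Set ℕ)}) := by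
  have hsum := onePoint (i := i_13) (j := j_13) (w := w_13) (v := v_13) m
    (by decide) (by decide) (by decide) (by decide) 5 r_13
    (by
      have hs : ∀ α, asig i_13 j_13 w_13 v_13 (r_13 α) = sg_13 α := by
        intro α; fin_cases α
        · exact s_13_0
        · exact s_13_1
        · exact s_13_2
        · exact s_13_3
        · exact s_13_4
      have hdist : ∀ α β : Fin 5, sg_13 α = sg_13 β → α = β := by decide
      exact fun α β h => hdist α β (by rw [← hs α, ← hs β]; exact h))
    (by
      intro s hs
      rcases s with _ | ⟨b1, b2⟩
      · exact ⟨0, s_13_0⟩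
      · cases b1 <;> cases b2
        · exact ⟨4, s_13_4⟩
        · exact ⟨2, s_13_2⟩
        · exact ⟨3, s_13_3⟩
        · exact ⟨1, s_13_1⟩
      )
  rw [Fin.sum_univ_five] at hsum
  have hL : m.μ i_13 = m.μ (subEmb (listPerm [2,1,4,3]) {a | a.val ∈ ({2,3,4} : Set ℕ)}) := by
    refine mu_mkEmbL m _ [2,3,4] ?_ ?_ ?_
    · intro x; simp
    · decide
    · decide
  rw [show (r_13 0).i' = ip_13_0 from rfl] at hsum
  have h0 : m.μ ip_13_0 = (1 : k) := by
    apply m.iso_one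
    unfold Function.Surjective
    decide
  rw [show (r_13 1).i' = ip_13_1 from rfl] at hsum
  have h1 : m.μ ip_13_1 = m.μ (subEmb (listPerm [3,1,2,5,4]) {a | a.val ∈ ({2,3,4,5} : Set ℕ)}) := by
    refine mu_mkEmbL m _ [2,3,4,5] ?_ ?_ ?_
    · intro x; simp
    · decide
    · decide
  rw [show (r_13 2).i' = ip_13_2 from rfl] at hsum
  have h2 : m.μ ip_13_2 = m.μ (subEmb (listPerm [3,2,1,5,4]) {a | a.val ∈ ({1,3,4,5} : Set ℕ)}) := by
    refine mu_mkEmbL m _ [1,3,4,5] ?_ ?_ ?_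
    · intro x; simp
    · decide
    · decide
  rw [show (r_13 3).i' = ip_13_3 from rfl] at hsum
  have h3 : m.μ ip_13_3 = m.μ (subEmb (listPerm [3,2,1,5,4]) {a | a.val ∈ ({2,3,4,5} : Set ℕ)}) := by
    refine mu_mkEmbL m _ [2,3,4,5] ?_ ?_ ?_
    · intro x; simp
    · decide
    · decide
  rw [show (r_13 4).i' = ip_13_4 from rfl] at hsum
  have h4 : m.μ ip_13_4 = m.μ (subEmb (listPerm [3,1,2,5,4]) {a | a.val ∈ ({1,3,4,5} : Set ℕ)}) := by
    refine mu_mkEmbL m _ [1,3,4,5] ?_ ?_ ?_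
    · intro x; simp
    · decide
    · decide
  rw [hL] at hsum
  rw [← h0, ← h1, ← h2, ← h3, ← h4]
  exact hsum


abbrev i_14 : Emb (listPerm [1,3,2]) (listPerm [1,2,4,3]) :=
  mkEmb _ _ (fun n => if n = 1 then 1 else if n = 2 then 3 else 4) (by decide) (by decide) (by decide)
abbrev j_14 : Emb (listPerm [1,3,2]) (listPerm [2,1,4,3]) :=
  mkEmb _ _ (fun n => if n = 1 then 1 else if n = 2 then 3 else 4) (by decide) (by decide) (by decide)
abbrev w_14 : (listPerm [1,2,4,3]).A := ⟨2, by decide⟩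
abbrev v_14 : (listPerm [2,1,4,3]).A := ⟨2, by decide⟩
abbrev ip_14_0 : Emb (listPerm [2,1,4,3]) (listPerm [3,1,2,5,4]) :=
  mkEmb _ _ (fun n => if n = 1 then 1 else if n = 2 then 3 else if n = 3 then 4 else 5) (by decide) (by decide) (by decide)
abbrev jp_14_0 : Emb (listPerm [1,2,4,3]) (listPerm [3,1,2,5,4]) :=
  mkEmb _ _ (fun n => if n = 1 then 1 else if n = 2 then 2 else if n = 3 then 4 else 5) (by decide) (by decide) (by decide)
abbrev A_14_0 : Amalg i_14 j_14 where
  Z := listPerm [3,1,2,5,4]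
  i' := ip_14_0
  j' := jp_14_0
  comm := by decide
  cover := by decide
abbrev ip_14_1 : Emb (listPerm [2,1,4,3]) (listPerm [2,1,3,5,4]) :=
  mkEmb _ _ (fun n => if n = 1 then 1 else if n = 2 then 2 else if n = 3 then 4 else 5) (by decide) (by decide) (by decide)
abbrev jp_14_1 : Emb (listPerm [1,2,4,3]) (listPerm [2,1,3,5,4]) :=
  mkEmb _ _ (fun n => if n = 1 then 1 else if n = 2 then 3 else if n = 3 then 4 else 5) (by decide) (by decide) (by decide)
abbrev A_14_1 : Amalg i_14 j_14 where
  Z := listPerm [2,1,3,5,4]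
  i' := ip_14_1
  j' := jp_14_1
  comm := by decide
  cover := by decide
abbrev r_14 : Fin 2 → Amalg i_14 j_14 := ![A_14_0, A_14_1]
abbrev sg_14 : Fin 2 → Option (Bool × Bool) := ![some (true, false), some (false, false)]
theorem s_14_0 : asig i_14 j_14 w_14 v_14 A_14_0 = some (true, false) :=
  asig_eq_some _ _ _ _ (by decide) (iff_of_true (by decide) rfl) (iff_of_false (by decide) (by simp))
theorem s_14_1 : asig i_14 j_14 w_14 v_14 A_14_1 = some (false, false) :=
  asig_eq_some _ _ _ _ (by decide) (iff_of_false (by decide) (by simp)) (iff_of_false (by decide) (by simp))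
theorem eqn_14 (k : Type) [CommRing k] (m : PMeasure k) :
    m.μ (subEmb (listPerm [1,2,4,3]) {a | a.val ∈ ({1,3,4} : Set ℕ)}) =
      m.μ (subEmb (listPerm [3,1,2,5,4]) {a | a.val ∈ ({1,3,4,5} : Set ℕ)}) + m.μ (subEmb (listPerm [2,1,3,5,4]) {a | a.val ∈ ({1,2,4,5} : Set ℕ)}) := by
  have hsum := onePoint (i := i_14) (j := j_14) (w := w_14) (v := v_14) m
    (by decide) (by decide) (by decide) (by decide) 2 r_14
    (by
      have hs : ∀ α, asig i_14 j_14 w_14 v_14 (r_14 α) = sg_14 α := by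
        intro α; fin_cases α
        · exact s_14_0
        · exact s_14_1
      have hdist : ∀ α β : Fin 2, sg_14 α = sg_14 β → α = β := by decide
      exact fun α β h => hdist α β (by rw [← hs α, ← hs β]; exact h))
    (by
      intro s hs
      rcases s with _ | ⟨b1, b2⟩
      · exact absurd hs (by rw [Cons_none]; decide)
      · cases b1 <;> cases b2
        · exact ⟨1, s_14_1⟩
        · exact absurd hs (by rw [Cons_some, C1_false, C2_true]; decide)
        · exact ⟨0, s_14_0⟩
        · exact absurd hs (by rw [Cons_some, C1_true, C2_true]; decide)
      )
  rw [Fin.sum_univ_two] at hsum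
  have hL : m.μ i_14 = m.μ (subEmb (listPerm [1,2,4,3]) {a | a.val ∈ ({1,3,4} : Set ℕ)}) := by
    refine mu_mkEmbL m _ [1,3,4] ?_ ?_ ?_
    · intro x; simp
    · decide
    · decide
  rw [show (r_14 0).i' = ip_14_0 from rfl] at hsum
  have h0 : m.μ ip_14_0 = m.μ (subEmb (listPerm [3,1,2,5,4]) {a | a.val ∈ ({1,3,4,5} : Set ℕ)}) := by
    refine mu_mkEmbL m _ [1,3,4,5] ?_ ?_ ?_
    · intro x; simp
    · decide
    · decide
  rw [show (r_14 1).i' = ip_14_1 from rfl] at hsum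
  have h1 : m.μ ip_14_1 = m.μ (subEmb (listPerm [2,1,3,5,4]) {a | a.val ∈ ({1,2,4,5} : Set ℕ)}) := by
    refine mu_mkEmbL m _ [1,2,4,5] ?_ ?_ ?_
    · intro x; simp
    · decide
    · decide
  rw [hL] at hsum
  rw [← h0, ← h1]
  exact hsum


abbrev i_15 : Emb (listPerm [2,1,3]) (listPerm [1,3,2,4]) :=
  mkEmb _ _ (fun n => if n = 1 then 2 else if n = 2 then 3 else 4) (by decide) (by decide) (by decide)
abbrev j_15 : Emb (listPerm [2,1,3]) (listPerm [2,1,4,3]) :=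
  mkEmb _ _ (fun n => n) (by decide) (by decide) (by decide)
abbrev w_15 : (listPerm [1,3,2,4]).A := ⟨1, by decide⟩
abbrev v_15 : (listPerm [2,1,4,3]).A := ⟨4, by decide⟩
abbrev ip_15_0 : Emb (listPerm [2,1,4,3]) (listPerm [1,3,2,5,4]) :=
  mkEmb _ _ (fun n => if n = 1 then 2 else if n = 2 then 3 else if n = 3 then 4 else 5) (by decide) (by decide) (by decide)
abbrev jp_15_0 : Emb (listPerm [1,3,2,4]) (listPerm [1,3,2,5,4]) :=
  mkEmb _ _ (fun n => n) (by decide) (by decide) (by decide)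
abbrev A_15_0 : Amalg i_15 j_15 where
  Z := listPerm [1,3,2,5,4]
  i' := ip_15_0
  j' := jp_15_0
  comm := by decide
  cover := by decide
abbrev r_15 : Fin 1 → Amalg i_15 j_15 := ![A_15_0]
abbrev sg_15 : Fin 1 → Option (Bool × Bool) := ![some (true, true)]
theorem s_15_0 : asig i_15 j_15 w_15 v_15 A_15_0 = some (true, true) :=
  asig_eq_some _ _ _ _ (by decide) (iff_of_true (by decide) rfl) (iff_of_true (by decide) rfl)
theorem eqn_15 (k : Type) [CommRing k] (m : PMeasure k) :
    m.μ (subEmb (listPerm [1,3,2,4]) {a | a.val ∈ ({2,3,4} : Set ℕ)}) =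
      m.μ (subEmb (listPerm [1,3,2,5,4]) {a | a.val ∈ ({2,3,4,5} : Set ℕ)}) := by
  have hsum := onePoint (i := i_15) (j := j_15) (w := w_15) (v := v_15) m
    (by decide) (by decide) (by decide) (by decide) 1 r_15
    (by
      have hs : ∀ α, asig i_15 j_15 w_15 v_15 (r_15 α) = sg_15 α := by
        intro α; fin_cases α
        · exact s_15_0
      have hdist : ∀ α β : Fin 1, sg_15 α = sg_15 β → α = β := by decide
      exact fun α β h => hdist α β (by rw [← hs α, ← hs β]; exact h))
    (by
      intro s hs
      rcases s with _ | ⟨b1, b2⟩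
      · exact absurd hs (by rw [Cons_none]; decide)
      · cases b1 <;> cases b2
        · exact absurd hs (by rw [Cons_some, C1_false, C2_false]; decide)
        · exact absurd hs (by rw [Cons_some, C1_false, C2_true]; decide)
        · exact absurd hs (by rw [Cons_some, C1_true, C2_false]; decide)
        · exact ⟨0, s_15_0⟩
      )
  rw [Fin.sum_univ_one] at hsum
  have hL : m.μ i_15 = m.μ (subEmb (listPerm [1,3,2,4]) {a | a.val ∈ ({2,3,4} : Set ℕ)}) := by
    refine mu_mkEmbL m _ [2,3,4] ?_ ?_ ?_
    · intro x; simp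
    · decide
    · decide
  rw [show (r_15 0).i' = ip_15_0 from rfl] at hsum
  have h0 : m.μ ip_15_0 = m.μ (subEmb (listPerm [1,3,2,5,4]) {a | a.val ∈ ({2,3,4,5} : Set ℕ)}) := by
    refine mu_mkEmbL m _ [2,3,4,5] ?_ ?_ ?_
    · intro x; simp
    · decide
    · decide
  rw [hL] at hsum
  rw [← h0]
  exact hsum


abbrev i_16 : Emb (listPerm [2,1,3]) (listPerm [3,2,1,4]) :=
  mkEmb _ _ (fun n => if n = 1 then 1 else if n = 2 then 3 else 4) (by decide) (by decide) (by decide)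
abbrev j_16 : Emb (listPerm [2,1,3]) (listPerm [2,1,4,3]) :=
  mkEmb _ _ (fun n => n) (by decide) (by decide) (by decide)
abbrev w_16 : (listPerm [3,2,1,4]).A := ⟨2, by decide⟩
abbrev v_16 : (listPerm [2,1,4,3]).A := ⟨4, by decide⟩
abbrev ip_16_0 : Emb (listPerm [2,1,4,3]) (listPerm [3,2,1,5,4]) :=
  mkEmb _ _ (fun n => if n = 1 then 1 else if n = 2 then 3 else if n = 3 then 4 else 5) (by decide) (by decide) (by decide)
abbrev jp_16_0 : Emb (listPerm [3,2,1,4]) (listPerm [3,2,1,5,4]) :=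
  mkEmb _ _ (fun n => n) (by decide) (by decide) (by decide)
abbrev A_16_0 : Amalg i_16 j_16 where
  Z := listPerm [3,2,1,5,4]
  i' := ip_16_0
  j' := jp_16_0
  comm := by decide
  cover := by decide
abbrev r_16 : Fin 1 → Amalg i_16 j_16 := ![A_16_0]
abbrev sg_16 : Fin 1 → Option (Bool × Bool) := ![some (true, true)]
theorem s_16_0 : asig i_16 j_16 w_16 v_16 A_16_0 = some (true, true) :=
  asig_eq_some _ _ _ _ (by decide) (iff_of_true (by decide) rfl) (iff_of_true (by decide) rfl)
theorem eqn_16 (k : Type) [CommRing k] (m : PMeasure k) :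
    m.μ (subEmb (listPerm [3,2,1,4]) {a | a.val ∈ ({1,3,4} : Set ℕ)}) =
      m.μ (subEmb (listPerm [3,2,1,5,4]) {a | a.val ∈ ({1,3,4,5} : Set ℕ)}) := by
  have hsum := onePoint (i := i_16) (j := j_16) (w := w_16) (v := v_16) m
    (by decide) (by decide) (by decide) (by decide) 1 r_16
    (by
      have hs : ∀ α, asig i_16 j_16 w_16 v_16 (r_16 α) = sg_16 α := by
        intro α; fin_cases α
        · exact s_16_0
      have hdist : ∀ α β : Fin 1, sg_16 α = sg_16 β → α = β := by decide
      exact fun α β h => hdist α β (by rw [← hs α, ← hs β]; exact h))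
    (by
      intro s hs
      rcases s with _ | ⟨b1, b2⟩
      · exact absurd hs (by rw [Cons_none]; decide)
      · cases b1 <;> cases b2
        · exact absurd hs (by rw [Cons_some, C1_false, C2_false]; decide)
        · exact absurd hs (by rw [Cons_some, C1_false, C2_true]; decide)
        · exact absurd hs (by rw [Cons_some, C1_true, C2_false]; decide)
        · exact ⟨0, s_16_0⟩
      )
  rw [Fin.sum_univ_one] at hsum
  have hL : m.μ i_16 = m.μ (subEmb (listPerm [3,2,1,4]) {a | a.val ∈ ({1,3,4} : Set ℕ)}) := by
    refine mu_mkEmbL m _ [1,3,4] ?_ ?_ ?_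
    · intro x; simp
    · decide
    · decide
  rw [show (r_16 0).i' = ip_16_0 from rfl] at hsum
  have h0 : m.μ ip_16_0 = m.μ (subEmb (listPerm [3,2,1,5,4]) {a | a.val ∈ ({1,3,4,5} : Set ℕ)}) := by
    refine mu_mkEmbL m _ [1,3,4,5] ?_ ?_ ?_
    · intro x; simp
    · decide
    · decide
  rw [hL] at hsum
  rw [← h0]
  exact hsum



/-- The inhomogeneous linear relation 1 + μ(i₈) + μ(i₉) + μ(i₁₄) + μ(i₁₅) + μ(i₆₀) = 0
holds for every measure, where i₈ : {1,3} ⊂ 132, i₉ : {1,2} ⊂ 132, i₁₄ : {1,3} ⊂ 231,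
i₁₅ : {1,2} ⊂ 231, and i₆₀ : {1,2,4,5} ⊂ 21354. -/
theorem inhomogeneous_linear_relation (k : Type) [CommRing k] (m : PMeasure k) :
    1 + m.μ (subEmb (listPerm [1,3,2]) {a | a.val ∈ ({1,3} : Set ℕ)})
      + m.μ (subEmb (listPerm [1,3,2]) {a | a.val ∈ ({1,2} : Set ℕ)})
      + m.μ (subEmb (listPerm [2,3,1]) {a | a.val ∈ ({1,3} : Set ℕ)})
      + m.μ (subEmb (listPerm [2,3,1]) {a | a.val ∈ ({1,2} : Set ℕ)})
      + m.μ (subEmb (listPerm [2,1,3,5,4]) {a | a.val ∈ ({1,2,4,5} : Set ℕ)}) = 0 := by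
  linear_combination - eqn_0 k m - eqn_1 k m + eqn_2 k m + eqn_3 k m - eqn_4 k m + eqn_5 k m + eqn_6 k m + eqn_7 k m - eqn_8 k m + eqn_9 k m - eqn_10 k m - eqn_11 k m - eqn_12 k m + eqn_13 k m - eqn_14 k m + eqn_15 k m - eqn_16 k m
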